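/- arXiv:1703.10192 — 6 statements merged into one kernel-verified Lean document; each statement's English description precedes it below -/
import Mathlib

section
/- Let H > 0, x ∈ ℝ, and let f : [0,H] → ℝ be continuously differentiable with f(0) ≠ x, f(H) ≠ x, and f'(t) ≠ 0 for every t ∈ [0,H] with f(t) = x. Then the set Z = {t ∈ [0,H] : f(t) = x} is finite, and (1/(2δ)) ∫₀^H |f'(t)| · 1_{|f(t)−x| ≤ δ} dt tends to the cardinality of Z as δ → 0⁺. (Kac's counting formula.) -/
open MeasureTheory Filter Set Topology

/-- **Kac's counting formula.** For a C¹ function `f` on `[0,H]` avoiding the level `x`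
at the endpoints and with nonvanishing derivative on the level set, the level set is finite
and `(1/(2δ)) ∫₀^H |f'(t)| 1_{|f(t)-x| ≤ δ} dt` tends to its cardinality as `δ → 0⁺`. -/
theorem kac_counting_formula
    (H x : ℝ) (hH : 0 < H) (f f' : ℝ → ℝ)
    (hderiv : ∀ t ∈ Icc (0:ℝ) H, HasDerivWithinAt f (f' t) (Icc (0:ℝ) H) t)
    (hcont : ContinuousOn f' (Icc (0:ℝ) H))
    (h0 : f 0 ≠ x) (hHx : f H ≠ x)
    (hnd : ∀ t ∈ Icc (0:ℝ) H, f t = x → f' t ≠ 0) :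
    {t ∈ Icc (0:ℝ) H | f t = x}.Finite ∧
    Tendsto
      (fun δ : ℝ => (1 / (2 * δ)) *
        ∫ t in Icc (0:ℝ) H,
          |f' t| * ({s : ℝ | |f s - x| ≤ δ}.indicator (fun _ => (1:ℝ)) t))
      (𝓝[>] (0:ℝ))
      (𝓝 (({t ∈ Icc (0:ℝ) H | f t = x}.ncard : ℝ))) := by
  set Z : Set ℝ := {t ∈ Icc (0:ℝ) H | f t = x} with hZdef
  have hfc : ContinuousOn f (Icc 0 H) := fun t ht => (hderiv t ht).continuousWithinAt
  -- zeros are interior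
  have hZint : ∀ z ∈ Z, z ∈ Ioo (0:ℝ) H := by
    rintro z ⟨⟨hz0, hzH⟩, hzx⟩
    rcases hz0.lt_or_eq with h | h
    · rcases hzH.lt_or_eq with h' | h'
      · exact ⟨h, h'⟩
      · exact absurd (h' ▸ hzx) hHx
    · exact absurd (h ▸ hzx) h0
  have hDA : ∀ z ∈ Ioo (0:ℝ) H, HasDerivAt f (f' z) z := fun z hz =>
    (hderiv z (Ioo_subset_Icc_self hz)).hasDerivAt (Icc_mem_nhds hz.1 hz.2)
  -- zeros are isolated
  have hiso : ∀ z ∈ Z, ∀ᶠ t in 𝓝[≠] z, f t ≠ x := by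
    intro z hz
    have h := (hDA z (hZint z hz)).eventually_ne (c := f z) (hnd z hz.1 hz.2)
    filter_upwards [h] with t ht
    rwa [hz.2] at ht
  -- Z is closed
  have hZclosed : IsClosed Z := by
    have : Z = Icc (0:ℝ) H ∩ f ⁻¹' {x} := by
      ext t; simp [hZdef, and_comm]
    rw [this]
    exact hfc.preimage_isClosed_of_isClosed isClosed_Icc isClosed_singleton
  -- Z is finite
  have hfin : Z.Finite := by
    by_contra hinf
    have hinf' : Z.Infinite := hinf
    obtain ⟨z, hzK, hacc⟩ := hinf'.exists_accPt_of_subset_isCompact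
      isCompact_Icc (fun t ht => ht.1)
    have hzZ : z ∈ Z := by
      have : z ∈ closure Z := mem_closure_iff_clusterPt.mpr hacc.clusterPt
      rwa [hZclosed.closure_eq] at this
    have h1 : ∀ᶠ t in 𝓝[≠] z ⊓ 𝓟 Z, f t ≠ x :=
      Eventually.filter_mono inf_le_left (hiso z hzZ)
    have h2 : ∀ᶠ t in 𝓝[≠] z ⊓ 𝓟 Z, t ∈ Z :=
      Eventually.filter_mono inf_le_right (eventually_principal.mpr fun t ht => ht)
    have : NeBot (𝓝[≠] z ⊓ 𝓟 Z) := hacc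
    obtain ⟨t, ht1, ht2⟩ := (h1.and h2).exists
    exact ht1 ht2.2
  refine ⟨hfin, ?_⟩
  classical
  set Zs : Finset ℝ := hfin.toFinset with hZs
  have hmemZs : ∀ z, z ∈ Zs ↔ z ∈ Z := fun z => hfin.mem_toFinset
  -- choose monotonicity radii
  have hnbhd : ∀ z : ℝ, ∃ η : ℝ, z ∈ Zs → (0 < η ∧ Icc (z-η) (z+η) ⊆ Ioo 0 H ∧
      (∀ t ∈ Icc (z-η) (z+η), 0 < f' z * f' t) ∧
      ∀ z' ∈ Zs, z' ≠ z → 2*η < |z - z'|) := by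
    intro z
    by_cases hz : z ∈ Zs
    swap
    · exact ⟨1, fun h => absurd h hz⟩
    have hzZ : z ∈ Z := (hmemZs z).mp hz
    have hzI : z ∈ Ioo (0:ℝ) H := hZint z hzZ
    have hca : ContinuousAt f' z := hcont.continuousAt (Icc_mem_nhds hzI.1 hzI.2)
    have hfz : f' z ≠ 0 := hnd z hzZ.1 hzZ.2
    have h3 : ∀ᶠ t in 𝓝 z, 0 < f' z * f' t := by
      have hmul : ContinuousAt (fun t => f' z * f' t) z := continuousAt_const.mul hca
      have : (0:ℝ) < f' z * f' z := mul_self_pos.mpr hfz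
      exact hmul.eventually_mem (Ioi_mem_nhds this)
    have h4 : ∀ᶠ t in 𝓝 z, t ∈ Ioo (0:ℝ) H := isOpen_Ioo.eventually_mem hzI
    obtain ⟨ε, hε, hball⟩ := Metric.eventually_nhds_iff.mp (h4.and h3)
    have key : ∃ c : ℝ, 0 < c ∧ ∀ z' ∈ Zs, z' ≠ z → 4 * c < |z - z'| := by
      rcases (Zs.erase z).eq_empty_or_nonempty with he | hne
      · exact ⟨1, one_pos, fun z' hz' hzz' =>
          absurd (Finset.mem_erase.mpr ⟨hzz', hz'⟩) (by simp [he])⟩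
      · have hmpos : 0 < (Zs.erase z).inf' hne (fun z' => |z - z'|) := by
          rw [Finset.lt_inf'_iff]
          intro z' hz'
          exact abs_pos.mpr (sub_ne_zero.mpr fun h => (Finset.mem_erase.mp hz').1 h.symm)
        refine ⟨(Zs.erase z).inf' hne (fun z' => |z - z'|) / 8, by linarith, ?_⟩
        intro z' hz' hzz'
        have h2 : (Zs.erase z).inf' hne (fun z' => |z - z'|) ≤ |z - z'| :=
          Finset.inf'_le _ (Finset.mem_erase.mpr ⟨hzz', hz'⟩)
        linarith
    obtain ⟨c, hc, hcsep⟩ := key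
    have hdist : ∀ t ∈ Icc (z - min (ε/2) c) (z + min (ε/2) c), dist t z < ε := by
      intro t ht
      rw [mem_Icc] at ht
      have h1 : min (ε/2) c ≤ ε/2 := min_le_left _ _
      rw [Real.dist_eq, abs_lt]
      constructor <;> linarith
    refine ⟨min (ε/2) c, fun _ => ⟨lt_min (by positivity) hc, ?_, ?_, ?_⟩⟩
    · exact fun t ht => (hball (hdist t ht)).1
    · exact fun t ht => (hball (hdist t ht)).2
    · intro z' hz' hzz'
      have h1 := hcsep z' hz' hzz'
      have h2 : min (ε/2) c ≤ c := min_le_right _ _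
      linarith
  choose η hη using hnbhd
  -- notation
  set a : ℝ → ℝ := fun z => z - η z with ha
  set b : ℝ → ℝ := fun z => z + η z with hb
  set e : ℝ → ℝ := fun z => if 0 < f' z then 1 else -1 with he
  set g : ℝ → ℝ → ℝ := fun z t => e z * (f t - x) with hg
  have habse : ∀ z, |e z| = 1 := by
    intro z; rw [he]; dsimp only; split_ifs <;> simp
  have habsg : ∀ z t, |g z t| = |f t - x| := by
    intro z t; rw [hg]; dsimp only; rw [abs_mul, habse, one_mul]
  have hab : ∀ z ∈ Zs, a z < z ∧ z < b z := by
    intro z hz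
    have := (hη z hz).1
    constructor <;> [exact sub_lt_self z this; exact lt_add_of_pos_right z this]
  have habI : ∀ z ∈ Zs, Icc (a z) (b z) ⊆ Ioo 0 H := fun z hz => (hη z hz).2.1
  have hepos : ∀ z ∈ Zs, ∀ t ∈ Icc (a z) (b z), 0 < e z * f' t := by
    intro z hz t ht
    have hsame := (hη z hz).2.2.1 t ht
    rcases mul_pos_iff.mp hsame with ⟨h1, h2⟩ | ⟨h1, h2⟩
    · rw [he]; dsimp only; rw [if_pos h1, one_mul]; exact h2
    · rw [he]; dsimp only; rw [if_neg (not_lt.mpr h1.le), neg_one_mul]; exact neg_pos.mpr h2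
  have habs : ∀ z ∈ Zs, ∀ t ∈ Icc (a z) (b z), |f' t| = e z * f' t := by
    intro z hz t ht
    rw [← abs_of_pos (hepos z hz t ht), abs_mul, habse, one_mul]
  have hgd : ∀ z ∈ Zs, ∀ t ∈ Icc (a z) (b z), HasDerivAt (g z) (e z * f' t) t := by
    intro z hz t ht
    exact ((hDA t (habI z hz ht)).sub_const x).const_mul (e z)
  have hgc : ∀ z ∈ Zs, ContinuousOn (g z) (Icc (a z) (b z)) :=
    fun z hz t ht => ((hgd z hz t ht).continuousAt).continuousWithinAt
  have hgmono : ∀ z ∈ Zs, StrictMonoOn (g z) (Icc (a z) (b z)) := by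
    intro z hz
    apply strictMonoOn_of_deriv_pos (convex_Icc _ _) (hgc z hz)
    intro t ht
    rw [interior_Icc] at ht
    rw [(hgd z hz t (Ioo_subset_Icc_self ht)).deriv]
    exact hepos z hz t (Ioo_subset_Icc_self ht)
  have hzmem : ∀ z ∈ Zs, z ∈ Icc (a z) (b z) := fun z hz => ⟨(hab z hz).1.le, (hab z hz).2.le⟩
  have hamem : ∀ z ∈ Zs, a z ∈ Icc (a z) (b z) := fun z hz =>
    ⟨le_refl _, by linarith [(hab z hz).1, (hab z hz).2]⟩
  have hbmem : ∀ z ∈ Zs, b z ∈ Icc (a z) (b z) := fun z hz =>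
    ⟨by linarith [(hab z hz).1, (hab z hz).2], le_refl _⟩
  have hgz : ∀ z ∈ Zs, g z z = 0 := by
    intro z hz
    have hzx : f z = x := ((hmemZs z).mp hz).2
    rw [hg]; dsimp only; rw [hzx]; ring
  have hga : ∀ z ∈ Zs, g z (a z) < 0 := by
    intro z hz
    have h := hgmono z hz (hamem z hz) (hzmem z hz) (hab z hz).1
    rwa [hgz z hz] at h
  have hgb : ∀ z ∈ Zs, 0 < g z (b z) := by
    intro z hz
    have h := hgmono z hz (hzmem z hz) (hbmem z hz) (hab z hz).2
    rwa [hgz z hz] at h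
  -- compact complement and the gap ε
  set K : Set ℝ := Icc 0 H \ ⋃ z ∈ Zs, Ioo (a z) (b z) with hK
  have hKc : IsCompact K := isCompact_Icc.diff (isOpen_biUnion fun _ _ => isOpen_Ioo)
  have hZcover : ∀ z ∈ Zs, z ∈ Ioo (a z) (b z) := fun z hz => ⟨(hab z hz).1, (hab z hz).2⟩
  have hK0 : (0:ℝ) ∈ K := by
    refine ⟨⟨le_refl _, hH.le⟩, ?_⟩
    intro hmem
    rw [mem_iUnion₂] at hmem
    obtain ⟨z, hz, h0mem⟩ := hmem
    exact lt_irrefl 0 (habI z hz (Ioo_subset_Icc_self h0mem)).1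
  obtain ⟨t0, ht0K, ht0min⟩ := hKc.exists_isMinOn ⟨0, hK0⟩
    (((hfc.sub continuousOn_const).abs).mono diff_subset)
  set ε : ℝ := |f t0 - x| with hEps
  have hεpos : 0 < ε := by
    rw [hEps, abs_pos, sub_ne_zero]
    intro hft0
    have ht0Z : t0 ∈ Z := ⟨ht0K.1, hft0⟩
    have ht0Zs : t0 ∈ Zs := (hmemZs t0).mpr ht0Z
    exact ht0K.2 (mem_iUnion₂.mpr ⟨t0, ht0Zs, hZcover t0 ht0Zs⟩)
  have hcover : ∀ t ∈ Icc (0:ℝ) H, |f t - x| < ε → ∃ z ∈ Zs, t ∈ Icc (a z) (b z) := by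
    intro t ht htf
    by_cases hK' : t ∈ K
    · exact absurd ((isMinOn_iff.mp ht0min) t hK') (not_le.mpr htf)
    · have h' : t ∈ ⋃ z ∈ Zs, Ioo (a z) (b z) := by
        by_contra h; exact hK' ⟨ht, h⟩
      rw [mem_iUnion₂] at h'
      obtain ⟨z, hz, hmem⟩ := h'
      exact ⟨z, hz, Ioo_subset_Icc_self hmem⟩
  have hdm : ∀ z ∈ Zs, 0 < min (-(g z (a z))) (g z (b z)) := fun z hz =>
    lt_min (by linarith [hga z hz]) (hgb z hz)
  -- the eventual equality
  have hev1 : ∀ᶠ δ in 𝓝[>] (0:ℝ), δ < ε :=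
    eventually_nhdsWithin_of_eventually_nhds (gt_mem_nhds hεpos)
  have hev2 : ∀ᶠ δ in 𝓝[>] (0:ℝ), ∀ z ∈ Zs, δ < min (-(g z (a z))) (g z (b z)) :=
    (eventually_all_finset _).mpr fun z hz =>
      eventually_nhdsWithin_of_eventually_nhds (gt_mem_nhds (hdm z hz))
  have hcard : (Z.ncard : ℝ) = Zs.card := by
    rw [Set.ncard_eq_toFinset_card Z hfin]
  refine Tendsto.congr' ?_ (tendsto_const_nhds : Tendsto (fun _ : ℝ => (Z.ncard : ℝ)) _ _)
  filter_upwards [hev1, hev2, self_mem_nhdsWithin] with δ h1 h2 h3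
  have hδpos : (0:ℝ) < δ := h3
  -- the sets
  have hiff : ∀ t : ℝ, |f t - x| ≤ δ ↔ f t ∈ Icc (x-δ) (x+δ) := by
    intro t
    rw [mem_Icc, abs_le]
    constructor <;> intro h <;> exact ⟨by linarith [h.1, h.2], by linarith [h.1, h.2]⟩
  set T : Set ℝ := Icc (0:ℝ) H ∩ f ⁻¹' (Icc (x-δ) (x+δ)) with hT
  have hTmeas : MeasurableSet T :=
    (hfc.preimage_isClosed_of_isClosed isClosed_Icc isClosed_Icc).measurableSet
  have hstep1 : (∫ t in Icc (0:ℝ) H,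
      |f' t| * ({s : ℝ | |f s - x| ≤ δ}.indicator (fun _ => (1:ℝ)) t))
      = ∫ t in T, |f' t| := by
    have e1 : EqOn (fun t => |f' t| * ({s : ℝ | |f s - x| ≤ δ}.indicator (fun _ => (1:ℝ)) t))
        (fun t => T.indicator (fun t => |f' t|) t) (Icc (0:ℝ) H) := by
      intro t ht
      by_cases hmem : |f t - x| ≤ δ
      · have hmemS : t ∈ {s : ℝ | |f s - x| ≤ δ} := hmem
        have hmemT : t ∈ T := ⟨ht, (hiff t).mp hmem⟩
        simp only [indicator_of_mem hmemS, indicator_of_mem hmemT, mul_one]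
      · have hmemS : t ∉ {s : ℝ | |f s - x| ≤ δ} := hmem
        have hmemT : t ∉ T := fun hc => hmem ((hiff t).mpr hc.2)
        simp only [indicator_of_notMem hmemS, indicator_of_notMem hmemT, mul_zero]
    rw [setIntegral_congr_fun measurableSet_Icc e1, setIntegral_indicator hTmeas,
      inter_eq_self_of_subset_right inter_subset_left]
  set σ : ℝ → Set ℝ := fun z => Icc (a z) (b z) ∩ f ⁻¹' (Icc (x-δ) (x+δ)) with hσ
  have hσmeas : ∀ z ∈ Zs, MeasurableSet (σ z) := by
    intro z hz
    exact ((hfc.mono (fun t ht => Ioo_subset_Icc_self (habI z hz ht))).preimage_isClosed_of_isClosed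
      isClosed_Icc isClosed_Icc).measurableSet
  have hσsub : ∀ z ∈ Zs, σ z ⊆ Icc (0:ℝ) H := fun z hz t ht =>
    Ioo_subset_Icc_self (habI z hz ht.1)
  have hTun : T = ⋃ z ∈ Zs, σ z := by
    ext t
    constructor
    · rintro ⟨ht, htf⟩
      have hlt : |f t - x| < ε := lt_of_le_of_lt ((hiff t).mpr htf) h1
      obtain ⟨z, hz, hmem⟩ := hcover t ht hlt
      exact mem_iUnion₂.mpr ⟨z, hz, hmem, htf⟩
    · intro hmem
      rw [mem_iUnion₂] at hmem
      obtain ⟨z, hz, hm1, hm2⟩ := hmem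
      exact ⟨hσsub z hz ⟨hm1, hm2⟩, hm2⟩
  have hdisj : Set.Pairwise ↑Zs (Function.onFun Disjoint σ) := by
    intro z hz z' hz' hne
    have hz₀ : z ∈ Zs := hz
    have hz'₀ : z' ∈ Zs := hz'
    rw [Function.onFun, Set.disjoint_left]
    rintro t ⟨ht1, -⟩ ⟨ht2, -⟩
    rw [mem_Icc] at ht1 ht2
    simp only [ha, hb] at ht1 ht2
    have hsep := (hη z hz₀).2.2.2 z' hz'₀ (Ne.symm hne)
    have hsep' := (hη z' hz'₀).2.2.2 z hz₀ hne
    have habs1 : |z - z'| ≤ |z - t| + |t - z'| := abs_sub_le _ _ _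
    have e1 : |z - t| ≤ η z := abs_le.mpr ⟨by linarith [ht1.1, ht1.2], by linarith [ht1.1, ht1.2]⟩
    have e2 : |t - z'| ≤ η z' := abs_le.mpr ⟨by linarith [ht2.1, ht2.2], by linarith [ht2.1, ht2.2]⟩
    have e3 : |z' - z| = |z - z'| := abs_sub_comm _ _
    linarith
  have hint : ∀ z ∈ Zs, IntegrableOn (fun t => |f' t|) (σ z) volume := by
    intro z hz
    exact ((hcont.abs).integrableOn_compact isCompact_Icc).mono_set (hσsub z hz)
  have hval : ∀ z ∈ Zs, (∫ t in σ z, |f' t|) = 2*δ := by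
    intro z hz
    have hmin := lt_min_iff.mp (h2 z hz)
    have hδa : g z (a z) ≤ -δ := by linarith [hmin.1]
    have hδb : δ ≤ g z (b z) := hmin.2.le
    have hcga : ContinuousOn (g z) (Icc (a z) z) :=
      (hgc z hz).mono (Icc_subset_Icc le_rfl (hab z hz).2.le)
    have hcgb : ContinuousOn (g z) (Icc z (b z)) :=
      (hgc z hz).mono (Icc_subset_Icc (hab z hz).1.le le_rfl)
    obtain ⟨u, huI, hu⟩ : ∃ u ∈ Icc (a z) z, g z u = -δ := by
      have hmem : -δ ∈ Icc (g z (a z)) (g z z) := by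
        rw [hgz z hz]; exact ⟨hδa, by linarith⟩
      obtain ⟨u, hu1, hu2⟩ := intermediate_value_Icc (hab z hz).1.le hcga hmem
      exact ⟨u, hu1, hu2⟩
    obtain ⟨v, hvI, hv⟩ : ∃ v ∈ Icc z (b z), g z v = δ := by
      have hmem : δ ∈ Icc (g z z) (g z (b z)) := by
        rw [hgz z hz]; exact ⟨hδpos.le, hδb⟩
      obtain ⟨v, hv1, hv2⟩ := intermediate_value_Icc (hab z hz).2.le hcgb hmem
      exact ⟨v, hv1, hv2⟩
    have huab : u ∈ Icc (a z) (b z) := ⟨huI.1, huI.2.trans (hab z hz).2.le⟩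
    have hvab : v ∈ Icc (a z) (b z) := ⟨(hab z hz).1.le.trans hvI.1, hvI.2⟩
    have huv : u ≤ v := huI.2.trans hvI.1
    have hset : σ z = Icc u v := by
      ext t
      constructor
      · rintro ⟨htab, htf⟩
        have htg : -δ ≤ g z t ∧ g z t ≤ δ := by
          have h' : |g z t| ≤ δ := by rw [habsg]; exact (hiff t).mpr htf
          exact abs_le.mp h'
        constructor
        · rw [← (hgmono z hz).le_iff_le huab htab, hu]; exact htg.1
        · rw [← (hgmono z hz).le_iff_le htab hvab, hv]; exact htg.2
      · intro htuv
        rw [mem_Icc] at htuv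
        have htab : t ∈ Icc (a z) (b z) := ⟨huab.1.trans htuv.1, htuv.2.trans hvab.2⟩
        refine ⟨htab, (hiff t).mp ?_⟩
        rw [← habsg z t, abs_le]
        constructor
        · rw [← hu]; exact (hgmono z hz).monotoneOn huab htab htuv.1
        · rw [← hv]; exact (hgmono z hz).monotoneOn htab hvab htuv.2
    have hIccab : Icc u v ⊆ Icc (a z) (b z) := Icc_subset_Icc huab.1 hvab.2
    have hsub0H : Icc u v ⊆ Icc (0:ℝ) H :=
      fun t ht => Ioo_subset_Icc_self (habI z hz (hIccab ht))
    rw [hset, setIntegral_congr_fun measurableSet_Icc (fun t ht => habs z hz t (hIccab ht)),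
      MeasureTheory.integral_Icc_eq_integral_Ioc, ← intervalIntegral.integral_of_le huv,
      intervalIntegral.integral_eq_sub_of_hasDerivAt
        (fun t ht => hgd z hz t (hIccab (by rwa [uIcc_of_le huv] at ht)))
        ((continuousOn_const.mul (hcont.mono (by rw [uIcc_of_le huv]; exact hsub0H))).intervalIntegrable),
      hu, hv]
    ring
  have hδne : (2*δ : ℝ) ≠ 0 := by positivity
  show (Z.ncard : ℝ) = 1 / (2*δ) * ∫ t in Icc (0:ℝ) H,
      |f' t| * ({s : ℝ | |f s - x| ≤ δ}.indicator (fun _ => (1:ℝ)) t)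
  rw [hstep1, hTun, MeasureTheory.integral_biUnion_finset Zs hσmeas hdisj hint,
    Finset.sum_congr rfl hval, Finset.sum_const, nsmul_eq_mul, hcard]
  field_simp
end

section
/- Let H > 0, x ∈ ℝ, and let f : [0,H] → ℝ be a piecewise C¹ path with jump times 0 = t₀ < t₁ < ⋯ < t_k < t_{k+1} = H and C¹ pieces g_i. Assume f avoids the level x at endpoints and jumps, and g_i'(t) ≠ 0 whenever g_i(t) = x for t ∈ [t_i,t_{i+1}] and 0 ≤ i ≤ k. Then the continuous crossing set C_x(f) is finite and (1/(2δ)) ∫₀^H |f'(t)| · 1_{|f(t)−x| ≤ δ} dt tends to the cardinality of C_x(f) as δ → 0⁺, where f' is the piecewise derivative of f. (Kac's counting formula for piecewise C¹ paths.) -/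
open MeasureTheory Filter Set Topology

/-- The continuous crossing set of the level `x` by `f` on `(0,H)`. -/
def crossSet (H x : ℝ) (f : ℝ → ℝ) : Set ℝ :=
  {s : ℝ | s ∈ Set.Ioo 0 H ∧ ContinuousAt f s ∧ f s = x}

/-- Positive-derivative case of the local lemma. -/
lemma kac_local_pos (a b x z : ℝ) (g g' : ℝ → ℝ)
    (hz : z ∈ Ioo a b) (hgz : g z = x)
    (hd : ∀ s ∈ Icc a b, HasDerivWithinAt g (g' s) (Icc a b) s)
    (hc : ContinuousOn g' (Icc a b)) (hpos : 0 < g' z)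
    (ε₀ : ℝ) (hε₀ : 0 < ε₀) :
    ∃ ε, 0 < ε ∧ ε ≤ ε₀ ∧ Icc (z-ε) (z+ε) ⊆ Ioo a b ∧
      ∀ᶠ δ in 𝓝[>] (0:ℝ),
        (Integrable ((Icc (z-ε) (z+ε)).indicator
            (fun s => |g' s| * (if |g s - x| ≤ δ then (1:ℝ) else 0))) volume) ∧
        ∫ s in Icc (z-ε) (z+ε), |g' s| * (if |g s - x| ≤ δ then (1:ℝ) else 0) = 2*δ := by
  have hIccnhds : Icc a b ∈ 𝓝 z := Icc_mem_nhds hz.1 hz.2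
  have hcong' : ContinuousAt g' z := (hc z (Ioo_subset_Icc_self hz)).continuousAt hIccnhds
  have hposnb : {s | 0 < g' s} ∈ 𝓝 z := hcong' (lt_mem_nhds hpos)
  have hU : {s | 0 < g' s} ∩ Ioo a b ∈ 𝓝 z := inter_mem hposnb (Ioo_mem_nhds hz.1 hz.2)
  obtain ⟨ε₁, hε₁pos, hball⟩ := Metric.mem_nhds_iff.mp hU
  set ε := min (ε₁/2) ε₀ with hεdef
  have hεpos : 0 < ε := lt_min (by linarith) hε₀
  have hsub : Icc (z-ε) (z+ε) ⊆ {s | 0 < g' s} ∩ Ioo a b := by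
    intro s hs
    apply hball
    rw [Metric.mem_ball, Real.dist_eq, abs_sub_lt_iff]
    have h1 : z - ε ≤ s := hs.1
    have h2 : s ≤ z + ε := hs.2
    have : ε ≤ ε₁/2 := min_le_left _ _
    constructor <;> linarith
  have hsubIoo : Icc (z-ε) (z+ε) ⊆ Ioo a b := fun s hs => (hsub hs).2
  have hsubIcc : Icc (z-ε) (z+ε) ⊆ Icc a b := hsubIoo.trans Ioo_subset_Icc_self
  have hg'pos : ∀ s ∈ Icc (z-ε) (z+ε), 0 < g' s := fun s hs => (hsub hs).1
  have hgcont : ContinuousOn g (Icc a b) := fun s hs =>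
    (hd s hs).differentiableWithinAt.continuousWithinAt
  -- strict monotonicity on the small interval
  have hmono : StrictMonoOn g (Icc (z-ε) (z+ε)) := by
    apply strictMonoOn_of_deriv_pos (convex_Icc _ _) (hgcont.mono hsubIcc)
    intro s hs
    rw [interior_Icc] at hs
    have hsIoo : s ∈ Ioo a b := hsubIoo (Ioo_subset_Icc_self hs)
    have hda : HasDerivAt g (g' s) s :=
      (hd s (Ioo_subset_Icc_self hsIoo)).hasDerivAt (Icc_mem_nhds hsIoo.1 hsIoo.2)
    rw [hda.deriv]
    exact hg'pos s (Ioo_subset_Icc_self hs)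
  have hzmem : z ∈ Icc (z-ε) (z+ε) := by constructor <;> linarith
  have hlm : z - ε ∈ Icc (z-ε) (z+ε) := by constructor <;> linarith
  have hrm : z + ε ∈ Icc (z-ε) (z+ε) := by constructor <;> linarith
  have hlt1 : g (z-ε) < x := by
    rw [← hgz]; exact hmono hlm hzmem (by linarith)
  have hlt2 : x < g (z+ε) := by
    rw [← hgz]; exact hmono hzmem hrm (by linarith)
  set δ₀ := min (x - g (z-ε)) (g (z+ε) - x) with hδ₀def
  have hδ₀pos : 0 < δ₀ := lt_min (by linarith) (by linarith)
  refine ⟨ε, hεpos, min_le_right _ _, hsubIoo, ?_⟩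
  filter_upwards [Ioo_mem_nhdsGT_of_mem (⟨le_refl _, hδ₀pos⟩ : (0:ℝ) ∈ Ico (0:ℝ) δ₀)]
    with δ hδ
  obtain ⟨hδpos, hδlt⟩ := hδ
  have hδle1 : g (z-ε) ≤ x - δ := by
    have : δ₀ ≤ x - g (z-ε) := min_le_left _ _
    linarith
  have hδle2 : x + δ ≤ g (z+ε) := by
    have : δ₀ ≤ g (z+ε) - x := min_le_right _ _
    linarith
  -- find u, v by IVT
  have hgcont' : ContinuousOn g (Icc (z-ε) z) :=
    (hgcont.mono hsubIcc).mono (Icc_subset_Icc le_rfl (by linarith))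
  have hgcont'' : ContinuousOn g (Icc z (z+ε)) :=
    (hgcont.mono hsubIcc).mono (Icc_subset_Icc (by linarith) le_rfl)
  obtain ⟨u, huI, hgu⟩ := intermediate_value_Icc (by linarith : z-ε ≤ z) hgcont'
    (⟨hδle1, by rw [hgz]; linarith⟩ : x - δ ∈ Icc (g (z-ε)) (g z))
  obtain ⟨v, hvI, hgv⟩ := intermediate_value_Icc (by linarith : z ≤ z+ε) hgcont''
    (⟨by rw [hgz]; linarith, hδle2⟩ : x + δ ∈ Icc (g z) (g (z+ε)))
  have humem : u ∈ Icc (z-ε) (z+ε) := ⟨huI.1, le_trans huI.2 (by linarith)⟩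
  have hvmem : v ∈ Icc (z-ε) (z+ε) := ⟨le_trans (by linarith) hvI.1, hvI.2⟩
  have huv : u ≤ v := le_trans huI.2 hvI.1
  have hsubuv : Icc u v ⊆ Icc (z-ε) (z+ε) := Icc_subset_Icc humem.1 hvmem.2
  -- the key pointwise identity
  have hkey : ∀ s, (Icc (z-ε) (z+ε)).indicator
      (fun s => |g' s| * (if |g s - x| ≤ δ then (1:ℝ) else 0)) s
      = (Icc u v).indicator (fun s => |g' s|) s := by
    intro s
    by_cases hs : s ∈ Icc (z-ε) (z+ε)
    · rw [indicator_of_mem hs]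
      have hiff : |g s - x| ≤ δ ↔ s ∈ Icc u v := by
        rw [abs_sub_le_iff]
        constructor
        · rintro ⟨h1, h2⟩
          constructor
          · by_contra hlt
            push_neg at hlt
            have := hmono hs humem hlt
            rw [hgu] at this; linarith
          · by_contra hlt
            push_neg at hlt
            have := hmono hvmem hs hlt
            rw [hgv] at this; linarith
        · intro hsuv
          have h1 := hmono.monotoneOn humem hs hsuv.1
          have h2 := hmono.monotoneOn hs hvmem hsuv.2
          rw [hgu] at h1; rw [hgv] at h2
          constructor <;> linarith
      by_cases hsc : s ∈ Icc u v
      · rw [indicator_of_mem hsc, if_pos (hiff.mpr hsc), mul_one]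
      · rw [indicator_of_notMem hsc, if_neg (fun h => hsc (hiff.mp h)), mul_zero]
    · rw [indicator_of_notMem hs, indicator_of_notMem (fun h => hs (hsubuv h))]
  have hintuv : IntegrableOn (fun s => |g' s|) (Icc u v) volume :=
    ((hc.mono (hsubuv.trans hsubIcc)).abs).integrableOn_Icc
  constructor
  · rw [funext hkey]
    exact hintuv.integrable_indicator measurableSet_Icc
  · rw [← integral_indicator measurableSet_Icc, funext hkey,
      integral_indicator measurableSet_Icc]
    have habs : ∀ s ∈ Icc u v, |g' s| = g' s := fun s hs =>
      abs_of_pos (hg'pos s (hsubuv hs))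
    rw [setIntegral_congr_fun measurableSet_Icc habs]
    have hft : ∫ s in u..v, g' s = g v - g u := by
      apply intervalIntegral.integral_eq_sub_of_hasDerivAt
      · intro t ht
        rw [uIcc_of_le huv] at ht
        have htIoo : t ∈ Ioo a b := hsubIoo (hsubuv ht)
        exact (hd t (Ioo_subset_Icc_self htIoo)).hasDerivAt (Icc_mem_nhds htIoo.1 htIoo.2)
      · apply ContinuousOn.intervalIntegrable
        rw [uIcc_of_le huv]
        exact hc.mono (hsubuv.trans hsubIcc)
    rw [integral_Icc_eq_integral_Ioc, ← intervalIntegral.integral_of_le huv, hft, hgu, hgv]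
    ring


lemma kac_local (a b x z : ℝ) (g g' : ℝ → ℝ)
    (hz : z ∈ Ioo a b) (hgz : g z = x)
    (hd : ∀ s ∈ Icc a b, HasDerivWithinAt g (g' s) (Icc a b) s)
    (hc : ContinuousOn g' (Icc a b)) (hnz : g' z ≠ 0)
    (ε₀ : ℝ) (hε₀ : 0 < ε₀) :
    ∃ ε, 0 < ε ∧ ε ≤ ε₀ ∧ Icc (z-ε) (z+ε) ⊆ Ioo a b ∧
      ∀ᶠ δ in 𝓝[>] (0:ℝ),
        (Integrable ((Icc (z-ε) (z+ε)).indicator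
            (fun s => |g' s| * (if |g s - x| ≤ δ then (1:ℝ) else 0))) volume) ∧
        ∫ s in Icc (z-ε) (z+ε), |g' s| * (if |g s - x| ≤ δ then (1:ℝ) else 0) = 2*δ := by
  rcases hnz.lt_or_gt with hneg | hpos
  · have hd' : ∀ s ∈ Icc a b, HasDerivWithinAt (fun t => -g t) (-g' s) (Icc a b) s :=
      fun s hs => (hd s hs).neg
    have hc' : ContinuousOn (fun s => -g' s) (Icc a b) := hc.neg
    obtain ⟨ε, h1, h2, h3, h4⟩ := kac_local_pos a b (-x) z (fun t => -g t) (fun s => -g' s)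
      hz (by simp [hgz]) hd' hc' (by simpa using hneg) ε₀ hε₀
    refine ⟨ε, h1, h2, h3, ?_⟩
    have heq : ∀ δ : ℝ, (fun s => |(fun s => -g' s) s| *
        (if |(fun t => -g t) s - (-x)| ≤ δ then (1:ℝ) else 0))
        = (fun s => |g' s| * (if |g s - x| ≤ δ then (1:ℝ) else 0)) := by
      intro δ; funext s
      have h5 : -g s - -x = -(g s - x) := by ring
      rw [h5, abs_neg, abs_neg]
    refine h4.mono fun δ hδ => ?_
    rw [heq δ] at hδ
    exact hδ
  · exact kac_local_pos a b x z g g' hz hgz hd hc hpos ε₀ hε₀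

/-- separation of a finite set -/
lemma exists_sep (S : Finset ℝ) : ∃ e > (0:ℝ), ∀ z ∈ S, ∀ z' ∈ S, z ≠ z' → e ≤ |z - z'| := by
  set T := Finset.image (fun p : ℝ × ℝ => |p.1 - p.2|) ((S ×ˢ S).filter fun p => p.1 ≠ p.2)
  rcases T.eq_empty_or_nonempty with hT | hT
  · refine ⟨1, one_pos, fun z hz z' hz' hne => ?_⟩
    exfalso
    have : |z - z'| ∈ T := Finset.mem_image.mpr
      ⟨(z, z'), Finset.mem_filter.mpr ⟨Finset.mem_product.mpr ⟨hz, hz'⟩, hne⟩, rfl⟩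
    rw [hT] at this; exact absurd this (Finset.notMem_empty _)
  · refine ⟨T.min' hT, ?_, fun z hz z' hz' hne => ?_⟩
    · obtain ⟨p, hp, hpe⟩ := Finset.mem_image.mp (T.min'_mem hT)
      have := (Finset.mem_filter.mp hp).2
      rw [← hpe]
      exact abs_pos.mpr (sub_ne_zero.mpr this)
    · exact T.min'_le _ (Finset.mem_image.mpr
        ⟨(z, z'), Finset.mem_filter.mpr ⟨Finset.mem_product.mpr ⟨hz, hz'⟩, hne⟩, rfl⟩)

lemma kac_piece (a b x : ℝ) (g g' : ℝ → ℝ) (hab : a < b)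
    (hd : ∀ s ∈ Icc a b, HasDerivWithinAt g (g' s) (Icc a b) s)
    (hc : ContinuousOn g' (Icc a b))
    (hga : g a ≠ x) (hgb : g b ≠ x)
    (hnd : ∀ s ∈ Icc a b, g s = x → g' s ≠ 0) :
    {s | s ∈ Ioo a b ∧ g s = x}.Finite ∧
    ∀ᶠ δ in 𝓝[>] (0:ℝ),
      ∫ s in Icc a b, |g' s| * (if |g s - x| ≤ δ then (1:ℝ) else 0)
        = 2*δ*({s | s ∈ Ioo a b ∧ g s = x}.ncard) := by
  set Z := {s | s ∈ Ioo a b ∧ g s = x} with hZdef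
  have hgcont : ContinuousOn g (Icc a b) := fun s hs =>
    (hd s hs).differentiableWithinAt.continuousWithinAt
  -- Z as subset of Icc
  have hZIcc : Z ⊆ Icc a b := fun s hs => Ioo_subset_Icc_self hs.1
  -- closed version
  set ZI := {s | s ∈ Icc a b ∧ g s = x} with hZIdef
  have hZZI : Z = ZI := by
    ext s
    constructor
    · rintro ⟨hs, hgs⟩; exact ⟨Ioo_subset_Icc_self hs, hgs⟩
    · rintro ⟨hs, hgs⟩
      refine ⟨⟨lt_of_le_of_ne hs.1 ?_, lt_of_le_of_ne hs.2 ?_⟩, hgs⟩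
      · rintro rfl; exact hga hgs
      · rintro rfl; exact hgb hgs
  -- finiteness
  have hZIcompact : IsCompact ZI := by
    have hcl : IsClosed ZI := by
      have heq : ZI = Icc a b ∩ g ⁻¹' {x} := by
        ext s; simp only [hZIdef, Set.mem_setOf_eq, Set.mem_inter_iff, Set.mem_preimage,
          Set.mem_singleton_iff]
      rw [heq]
      exact hgcont.preimage_isClosed_of_isClosed isClosed_Icc isClosed_singleton
    exact isCompact_Icc.of_isClosed_subset hcl (fun s hs => hs.1)
  have hdisc : DiscreteTopology ↑ZI := by
    rw [discreteTopology_subtype_iff]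
    intro z hz
    have hnz := hnd z hz.1 hz.2
    have hslope : Tendsto (slope g z) (𝓝[Icc a b \ {z}] z) (𝓝 (g' z)) :=
      hasDerivWithinAt_iff_tendsto_slope.mp (hd z hz.1)
    have hev : ∀ᶠ s in 𝓝[Icc a b \ {z}] z, slope g z s ≠ 0 :=
      hslope (isOpen_compl_singleton.mem_nhds hnz)
    have hle : 𝓝[{z}ᶜ] z ⊓ 𝓟 ZI ≤ 𝓝[Icc a b \ {z}] z := by
      rw [← nhdsWithin_inter']
      apply nhdsWithin_mono
      rintro s ⟨hs1, hs2⟩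
      exact ⟨hs2.1, hs1⟩
    rw [← Filter.empty_mem_iff_bot]
    have hev' : ∀ᶠ s in 𝓝[{z}ᶜ] z ⊓ 𝓟 ZI, slope g z s ≠ 0 := hev.filter_mono hle
    have hmem : ({z}ᶜ ∩ ZI : Set ℝ) ∈ 𝓝[{z}ᶜ] z ⊓ 𝓟 ZI := by
      rw [← nhdsWithin_inter']
      exact self_mem_nhdsWithin
    filter_upwards [hev', hmem] with s h1 h2
    exfalso
    apply h1
    rw [slope_def_field, h2.2.2, hz.2, sub_self, zero_div]
  have hZfin : Z.Finite := hZZI ▸ hZIcompact.finite (isDiscrete_iff_discreteTopology.mpr hdisc)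
  refine ⟨hZfin, ?_⟩
  rcases Set.eq_empty_or_nonempty Z with hZe | hZne
  · -- no zeros: integrand eventually vanishes
    have hne : (Icc a b).Nonempty := nonempty_Icc.mpr hab.le
    obtain ⟨s₀, hs₀, hmin⟩ := isCompact_Icc.exists_isMinOn hne
      ((hgcont.sub continuousOn_const).abs)
    have hc0 : 0 < |g s₀ - x| := by
      rw [abs_pos, sub_ne_zero]
      intro h
      have hmem : s₀ ∈ Z := hZZI ▸ (⟨hs₀, h⟩ : s₀ ∈ ZI)
      rw [hZe] at hmem
      exact hmem
    filter_upwards [Ioo_mem_nhdsGT_of_mem (⟨le_refl (0:ℝ), hc0⟩ : (0:ℝ) ∈ Ico (0:ℝ) _)]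
      with δ hδ
    have hzero : ∀ s ∈ Icc a b,
        |g' s| * (if |g s - x| ≤ δ then (1:ℝ) else 0) = (fun _ => (0:ℝ)) s := by
      intro s hs
      have h1 : |g s₀ - x| ≤ |g s - x| := hmin hs
      have h2 : δ < |g s - x| := lt_of_lt_of_le hδ.2 h1
      rw [if_neg (not_le.mpr h2), mul_zero]
    rw [setIntegral_congr_fun measurableSet_Icc hzero, hZe]
    simp
  · obtain ⟨e, hepos, hsep⟩ := exists_sep hZfin.toFinset
    have hloc : ∀ z ∈ Z, ∃ ε, 0 < ε ∧ ε ≤ e/3 ∧ Icc (z-ε) (z+ε) ⊆ Ioo a b ∧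
        ∀ᶠ δ in 𝓝[>] (0:ℝ),
          (Integrable ((Icc (z-ε) (z+ε)).indicator
              (fun s => |g' s| * (if |g s - x| ≤ δ then (1:ℝ) else 0))) volume) ∧
          ∫ s in Icc (z-ε) (z+ε), |g' s| * (if |g s - x| ≤ δ then (1:ℝ) else 0) = 2*δ :=
      fun z hz => kac_local a b x z g g' hz.1 hz.2 hd hc (hnd z (hZIcc hz) hz.2)
        (e/3) (by linarith)
    choose! ε hε1 hε2 hε3 hε4 using hloc
    set F := hZfin.toFinset with hF
    have hFmem : ∀ z, z ∈ F ↔ z ∈ Z := fun z => hZfin.mem_toFinset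
    set U := ⋃ z ∈ F, Ioo (z - ε z) (z + ε z) with hU
    set K := Icc a b \ U with hK
    have hKcomp : IsCompact K := isCompact_Icc.diff (isOpen_biUnion fun z _ => isOpen_Ioo)
    have hexc : ∃ c > (0:ℝ), ∀ s ∈ K, c ≤ |g s - x| := by
      rcases K.eq_empty_or_nonempty with h | hKne
      · exact ⟨1, one_pos, by rw [h]; simp⟩
      · obtain ⟨s₀, hs₀, hmin⟩ := hKcomp.exists_isMinOn hKne
          (((hgcont.mono diff_subset).sub continuousOn_const).abs)
        refine ⟨|g s₀ - x|, abs_pos.mpr (sub_ne_zero.mpr fun hgs => ?_),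
          fun s hs => hmin hs⟩
        have hzZ : s₀ ∈ Z := hZZI ▸ (⟨hs₀.1, hgs⟩ : s₀ ∈ ZI)
        have hεp := hε1 s₀ hzZ
        have : s₀ ∈ U := mem_biUnion ((hFmem s₀).mpr hzZ)
          (⟨by linarith, by linarith⟩ : s₀ ∈ Ioo (s₀ - ε s₀) (s₀ + ε s₀))
        exact hs₀.2 this
    obtain ⟨c, hcpos, hcK⟩ := hexc
    have hdisj : ∀ z ∈ Z, ∀ z' ∈ Z, z' ≠ z → ∀ s,
        s ∈ Icc (z - ε z) (z + ε z) → s ∉ Icc (z' - ε z') (z' + ε z') := by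
      intro z hz z' hz' hne s hs hs'
      have h1 := hε2 z hz
      have h2 := hε2 z' hz'
      have he := hsep z' ((hFmem z').mpr hz') z ((hFmem z).mpr hz) hne
      have habs : |z' - z| ≤ ε z + ε z' := by
        rw [abs_sub_le_iff]
        obtain ⟨ha1, ha2⟩ := hs
        obtain ⟨hb1, hb2⟩ := hs'
        constructor <;> linarith
      have := abs_nonneg (z' - z)
      linarith
    have hev : ∀ᶠ δ in 𝓝[>] (0:ℝ), ∀ z ∈ F,
        (Integrable ((Icc (z-ε z) (z+ε z)).indicator
            (fun s => |g' s| * (if |g s - x| ≤ δ then (1:ℝ) else 0))) volume) ∧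
        ∫ s in Icc (z-ε z) (z+ε z), |g' s| * (if |g s - x| ≤ δ then (1:ℝ) else 0) = 2*δ :=
      (Filter.eventually_all_finset F).mpr (fun z hzF => hε4 z ((hFmem z).mp hzF))
    filter_upwards [hev, Ioo_mem_nhdsGT_of_mem (⟨le_refl (0:ℝ), hcpos⟩ : (0:ℝ) ∈ Ico 0 c)]
      with δ hδz hδc
    obtain ⟨hδpos, hδc'⟩ := hδc
    set φ : ℝ → ℝ := fun s => |g' s| * (if |g s - x| ≤ δ then (1:ℝ) else 0) with hφ
    have hφ0 : ∀ s, ¬ |g s - x| ≤ δ → φ s = 0 := by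
      intro s hsm
      rw [hφ]
      simp only [if_neg hsm, mul_zero]
    have hpt : ∀ s, (Icc a b).indicator φ s
        = ∑ z ∈ F, (Icc (z - ε z) (z + ε z)).indicator φ s := by
      intro s
      by_cases hsab : s ∈ Icc a b
      · rw [indicator_of_mem hsab]
        by_cases hsmall : |g s - x| ≤ δ
        · have hsU : s ∈ U := by
            by_contra h
            have hsK : s ∈ K := ⟨hsab, h⟩
            have := hcK s hsK
            linarith
          obtain ⟨z, h1, hzF, h2⟩ : ∃ i, i - ε i < s ∧ i ∈ F ∧ s < i + ε i := by
            simpa [hU, Set.mem_iUnion] using hsU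
          have hsz : s ∈ Ioo (z - ε z) (z + ε z) := ⟨h1, h2⟩
          rw [Finset.sum_eq_single_of_mem z hzF]
          · rw [indicator_of_mem (Ioo_subset_Icc_self hsz)]
          · intro z' hz'F hne
            apply indicator_of_notMem
            intro hs'
            exact hdisj z ((hFmem z).mp hzF) z' ((hFmem z').mp hz'F) hne s
              (Ioo_subset_Icc_self hsz) hs'
        · rw [hφ0 s hsmall]
          symm
          apply Finset.sum_eq_zero
          intro z hzF
          by_cases h : s ∈ Icc (z - ε z) (z + ε z)
          · rw [indicator_of_mem h, hφ0 s hsmall]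
          · rw [indicator_of_notMem h]
      · rw [indicator_of_notMem hsab]
        symm
        apply Finset.sum_eq_zero
        intro z hzF
        apply indicator_of_notMem
        intro h
        exact hsab (Ioo_subset_Icc_self (hε3 z ((hFmem z).mp hzF) h))
    have hcard : (Z.ncard : ℝ) = (F.card : ℝ) := by
      rw [Set.ncard_eq_toFinset_card Z hZfin]
    rw [← integral_indicator measurableSet_Icc, funext hpt,
      integral_finset_sum F (fun z hzF => (hδz z hzF).1)]
    have hterm : ∀ z ∈ F, ∫ s, (Icc (z - ε z) (z + ε z)).indicator φ s = 2*δ := by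
      intro z hzF
      rw [integral_indicator measurableSet_Icc]
      exact (hδz z hzF).2
    rw [Finset.sum_congr rfl hterm, Finset.sum_const, nsmul_eq_mul, hcard]
    ring

lemma kac_ncard_biUnion {t : ℕ → Set ℝ} (n : ℕ) (hfin : ∀ i < n, (t i).Finite)
    (hdis : ∀ i < n, ∀ j < n, i ≠ j → Disjoint (t i) (t j)) :
    (⋃ i ∈ Finset.range n, t i).ncard = ∑ i ∈ Finset.range n, (t i).ncard := by
  induction n with
  | zero => simp
  | succ m ih =>
    rw [Finset.range_add_one, Finset.set_biUnion_insert, Finset.sum_insert Finset.notMem_range_self]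
    have hdisjU : Disjoint (t m) (⋃ i ∈ Finset.range m, t i) := by
      apply Set.disjoint_iUnion_right.mpr
      intro i
      apply Set.disjoint_iUnion_right.mpr
      intro hi
      have hilt := Finset.mem_range.mp hi
      exact hdis m (by omega) i (by omega) (by omega)
    rw [Set.ncard_union_eq hdisjU (hfin m (by omega))
      (Set.Finite.biUnion (Finset.range m).finite_toSet
        (fun i hi => hfin i (by have := Finset.mem_range.mp hi; omega))),
      ih (fun i hi => hfin i (by omega)) (fun i hi j hj hne => hdis i (by omega) j (by omega) hne)]


/-- **Kac's counting formula for piecewise C¹ paths.** -/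
theorem kac_counting_formula_piecewise
    (H x : ℝ) (hH : 0 < H) (k : ℕ) (τ : ℕ → ℝ)
    (g g' : ℕ → ℝ → ℝ) (f f' : ℝ → ℝ)
    (hτ0 : τ 0 = 0) (hτH : τ (k+1) = H)
    (hτmono : ∀ i ≤ k, τ i < τ (i+1))
    (hderiv : ∀ i ≤ k, ∀ s ∈ Icc (τ i) (τ (i+1)),
      HasDerivWithinAt (g i) (g' i s) (Icc (τ i) (τ (i+1))) s)
    (hcont : ∀ i ≤ k, ContinuousOn (g' i) (Icc (τ i) (τ (i+1))))
    (hfg : ∀ i ≤ k, ∀ s ∈ Ico (τ i) (τ (i+1)), f s = g i s)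
    (hfH : f H = g k H)
    (hf' : ∀ i ≤ k, ∀ s ∈ Ico (τ i) (τ (i+1)), f' s = g' i s)
    (havoid : ∀ i ≤ k, g i (τ i) ≠ x ∧ g i (τ (i+1)) ≠ x)
    (hnd : ∀ i ≤ k, ∀ s ∈ Icc (τ i) (τ (i+1)), g i s = x → g' i s ≠ 0) :
    (crossSet H x f).Finite ∧
    Tendsto
      (fun δ : ℝ => (1 / (2 * δ)) *
        ∫ s in Icc (0:ℝ) H,
          |f' s| * ({u : ℝ | |f u - x| ≤ δ}.indicator (fun _ => (1:ℝ)) s))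
      (𝓝[>] (0:ℝ))
      (𝓝 (((crossSet H x f).ncard : ℝ))) := by
  classical
  have hτle : ∀ j, j ≤ k+1 → ∀ i, i ≤ j → τ i ≤ τ j := by
    intro j
    induction j with
    | zero => intro _ i hi; rw [Nat.le_zero.mp hi]
    | succ n ih =>
      intro hj i hi
      rcases Nat.eq_or_lt_of_le hi with rfl | hlt
      · exact le_rfl
      · have h1 : τ i ≤ τ n := ih (by omega) i (by omega)
        have h2 : τ n < τ (n+1) := hτmono n (by omega)
        linarith
  set Z : ℕ → Set ℝ := fun i => {s | s ∈ Ioo (τ i) (τ (i+1)) ∧ g i s = x} with hZdef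
  have hpiece : ∀ i ≤ k, (Z i).Finite ∧ ∀ᶠ δ in 𝓝[>](0:ℝ),
      ∫ s in Icc (τ i) (τ (i+1)), |g' i s| * (if |g i s - x| ≤ δ then (1:ℝ) else 0)
        = 2*δ*((Z i).ncard) :=
    fun i hi => kac_piece _ _ x (g i) (g' i) (hτmono i hi) (hderiv i hi) (hcont i hi)
      (havoid i hi).1 (havoid i hi).2 (hnd i hi)
  have hcross : crossSet H x f = ⋃ i ∈ Finset.range (k+1), Z i := by
    ext s
    simp only [crossSet, Set.mem_setOf_eq, Set.mem_iUnion, Finset.mem_range]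
    constructor
    · rintro ⟨hs, _, hfs⟩
      have hP0 : τ 0 ≤ s := by rw [hτ0]; exact hs.1.le
      obtain ⟨i, hile, hPi, hgreat⟩ : ∃ i, i ≤ k+1 ∧ τ i ≤ s ∧
          ∀ jj, i < jj → jj ≤ k+1 → ¬ τ jj ≤ s :=
        ⟨Nat.findGreatest (fun j => τ j ≤ s) (k+1),
          Nat.findGreatest_le (P := fun j => τ j ≤ s) _,
          Nat.findGreatest_spec (P := fun j => τ j ≤ s) (Nat.zero_le _) hP0,
          fun jj h1 h2 => Nat.findGreatest_is_greatest (P := fun j => τ j ≤ s) h1 h2⟩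
      have hik : i ≤ k := by
        rcases Nat.eq_or_lt_of_le hile with heq | h
        · exfalso; rw [heq, hτH] at hPi; linarith [hs.2]
        · omega
      have hlt : s < τ (i+1) := by
        by_contra h
        push_neg at h
        exact hgreat (i+1) (Nat.lt_succ_self i) (by omega) h
      have hτis : τ i < s := by
        rcases lt_or_eq_of_le hPi with h | h
        · exact h
        · exfalso
          apply (havoid i hik).1
          rw [h, ← hfg i hik s ⟨hPi, hlt⟩]
          exact hfs
      refine ⟨i, by omega, ⟨⟨hτis, hlt⟩, ?_⟩⟩
      rw [← hfg i hik s ⟨hPi, hlt⟩]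
      exact hfs
    · rintro ⟨i, hik', ⟨⟨h1, h2⟩, hgs⟩⟩
      have hik : i ≤ k := by omega
      have h0s : 0 < s := by
        have := hτle i (by omega) 0 (by omega)
        rw [hτ0] at this; linarith
      have hsH : s < H := by
        have := hτle (k+1) le_rfl (i+1) (by omega)
        rw [hτH] at this; linarith
      have hIoomem : Ioo (τ i) (τ (i+1)) ∈ 𝓝 s := Ioo_mem_nhds h1 h2
      have hfeq : f =ᶠ[𝓝 s] g i :=
        eventuallyEq_of_mem hIoomem (fun t ht => hfg i hik t ⟨ht.1.le, ht.2⟩)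
      have hgc : ContinuousAt (g i) s :=
        ((hderiv i hik s (Ioo_subset_Icc_self ⟨h1, h2⟩)).hasDerivAt
          (Icc_mem_nhds h1 h2)).continuousAt
      refine ⟨⟨h0s, hsH⟩, hgc.congr hfeq.symm, ?_⟩
      rw [hfg i hik s ⟨h1.le, h2⟩]
      exact hgs
  have hdisjkey : ∀ i j, i < j → j < k+1 → Disjoint (Z i) (Z j) := by
    intro i j hij hj
    rw [Set.disjoint_left]
    rintro s ⟨hs1, _⟩ ⟨hs2, _⟩
    have h := hτle j (by omega) (i+1) (by omega)
    have := hs1.2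
    have := hs2.1
    linarith
  have hdisj : ∀ i < k+1, ∀ j < k+1, i ≠ j → Disjoint (Z i) (Z j) := by
    intro i hi j hj hne
    rcases Nat.lt_or_ge i j with h | h
    · exact hdisjkey i j h hj
    · exact (hdisjkey j i (by omega) hi).symm
  have hfinZ : ∀ i < k+1, (Z i).Finite := fun i hi => (hpiece i (by omega)).1
  have hfin : (crossSet H x f).Finite := by
    rw [hcross]
    exact Set.Finite.biUnion (Finset.range (k+1)).finite_toSet
      (fun i hi => hfinZ i (Finset.mem_range.mp hi))
  refine ⟨hfin, ?_⟩
  have hNcard : ((crossSet H x f).ncard : ℝ) = ∑ i ∈ Finset.range (k+1), ((Z i).ncard : ℝ) := by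
    rw [hcross, kac_ncard_biUnion (k+1) hfinZ hdisj]
    push_cast
    rfl
  have hgic : ∀ i ≤ k, ContinuousOn (g i) (Icc (τ i) (τ (i+1))) :=
    fun i hi s hs => (hderiv i hi s hs).differentiableWithinAt.continuousWithinAt
  have hφint : ∀ δ : ℝ, ∀ i ≤ k, IntegrableOn
      (fun s => |g' i s| * (if |g i s - x| ≤ δ then (1:ℝ) else 0))
      (Icc (τ i) (τ (i+1))) volume := by
    intro δ i hi
    have h1 : IntegrableOn (fun s => |g' i s|) (Icc (τ i) (τ (i+1))) volume :=
      ((hcont i hi).abs).integrableOn_Icc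
    have houter : Measurable (fun y : ℝ => if |y - x| ≤ δ then (1:ℝ) else 0) := by
      apply Measurable.ite _ measurable_const measurable_const
      exact (isClosed_le (continuous_abs.comp (continuous_id.sub continuous_const))
        continuous_const).measurableSet
    have hgm : AEMeasurable (g i) (volume.restrict (Icc (τ i) (τ (i+1)))) :=
      (hgic i hi).aemeasurable measurableSet_Icc
    have habs : AEMeasurable (fun s => |g' i s|) (volume.restrict (Icc (τ i) (τ (i+1)))) :=
      ((hcont i hi).abs).aemeasurable measurableSet_Icc
    have hmeas : AEStronglyMeasurable
        (fun s => |g' i s| * (if |g i s - x| ≤ δ then (1:ℝ) else 0))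
        (volume.restrict (Icc (τ i) (τ (i+1)))) :=
      (habs.mul (houter.comp_aemeasurable hgm)).aestronglyMeasurable
    apply Integrable.mono' h1 hmeas
    apply ae_of_all
    intro s
    rw [Real.norm_eq_abs, abs_mul, abs_abs]
    by_cases h : |g i s - x| ≤ δ
    · rw [if_pos h]; simp
    · rw [if_neg h]; simp
  apply Tendsto.congr' _ tendsto_const_nhds
  have hevall : ∀ᶠ δ in 𝓝[>](0:ℝ), ∀ i ∈ Finset.range (k+1),
      ∫ s in Icc (τ i) (τ (i+1)), |g' i s| * (if |g i s - x| ≤ δ then (1:ℝ) else 0)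
        = 2*δ*((Z i).ncard) :=
    (Filter.eventually_all_finset _).mpr
      (fun i hi => (hpiece i (Nat.lt_succ_iff.mp (Finset.mem_range.mp hi))).2)
  filter_upwards [hevall, self_mem_nhdsWithin] with δ hδint hδpos
  rw [Set.mem_Ioi] at hδpos
  have hFind : ∀ s, |f' s| * ({u : ℝ | |f u - x| ≤ δ}.indicator (fun _ => (1:ℝ)) s)
      = |f' s| * (if |f s - x| ≤ δ then (1:ℝ) else 0) := by
    intro s
    rw [Set.indicator_apply]
    simp only [Set.mem_setOf_eq]
  set F : ℝ → ℝ := fun s => |f' s| * (if |f s - x| ≤ δ then (1:ℝ) else 0) with hFdef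
  have hFIoo : ∀ i ≤ k, EqOn F
      (fun s => |g' i s| * (if |g i s - x| ≤ δ then (1:ℝ) else 0))
      (Ioo (τ i) (τ (i+1))) := by
    intro i hi s hs
    have hsm : s ∈ Ico (τ i) (τ (i+1)) := ⟨hs.1.le, hs.2⟩
    simp only [hFdef]
    rw [hfg i hi s hsm, hf' i hi s hsm]
  have hFint : ∀ i < k+1, IntervalIntegrable F volume (τ i) (τ (i+1)) := by
    intro i hi
    have hik : i ≤ k := by omega
    rw [intervalIntegrable_iff, uIoc_of_le (hτmono i hik).le]
    have h2 : IntegrableOn F (Ioo (τ i) (τ (i+1))) volume :=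
      Integrable.congr ((hφint δ i hik).mono_set Ioo_subset_Icc_self)
        (eventuallyEq_of_mem (self_mem_ae_restrict measurableSet_Ioo)
          (fun s hs => ((hFIoo i hik) hs).symm))
    show Integrable F (volume.restrict (Ioc (τ i) (τ (i+1))))
    rw [← restrict_Ioo_eq_restrict_Ioc]
    exact h2
  have hcalc : ∫ s in Icc (0:ℝ) H, F s = ∑ i ∈ Finset.range (k+1), (2*δ*((Z i).ncard : ℝ)) := by
    rw [integral_Icc_eq_integral_Ioc, ← intervalIntegral.integral_of_le hH.le,
      ← hτ0, ← hτH, ← intervalIntegral.sum_integral_adjacent_intervals hFint]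
    apply Finset.sum_congr rfl
    intro i hi
    have hik : i ≤ k := Nat.lt_succ_iff.mp (Finset.mem_range.mp hi)
    rw [intervalIntegral.integral_of_le (hτmono i hik).le,
      ← restrict_Ioo_eq_restrict_Ioc,
      setIntegral_congr_fun measurableSet_Ioo (hFIoo i hik),
      restrict_Ioo_eq_restrict_Icc]
    exact hδint i hi
  show ((crossSet H x f).ncard : ℝ) = (1 / (2 * δ)) *
      ∫ s in Icc (0:ℝ) H, |f' s| * ({u : ℝ | |f u - x| ≤ δ}.indicator (fun _ => (1:ℝ)) s)
  have hre : ∫ s in Icc (0:ℝ) H,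
      |f' s| * ({u : ℝ | |f u - x| ≤ δ}.indicator (fun _ => (1:ℝ)) s)
      = ∫ s in Icc (0:ℝ) H, F s := by
    apply integral_congr_ae
    apply ae_of_all
    intro s
    exact hFind s
  rw [hre, hcalc, ← Finset.mul_sum, ← hNcard]
  field_simp
end

section
/- Let a < b, m > 0, x ∈ ℝ and δ > 0, and let g : [a,b] → ℝ be differentiable with |g'(t)| ≥ m for all t ∈ [a,b]. Then the Lebesgue measure of the set {t ∈ [a,b] : |g(t) − x| ≤ δ} is at most 2δ/m. (Occupation-time bound used for the domination argument in the proof of the Dalmao–Mordecki formula.) -/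
open MeasureTheory Set

/-- **Occupation-time bound.** If `|g'| ≥ m > 0` on `[a,b]`, then the Lebesgue measure of
`{t ∈ [a,b] : |g(t) − x| ≤ δ}` is at most `2δ/m`. -/
theorem occupation_time_bound
    (a b m x δ : ℝ) (hab : a < b) (hm : 0 < m) (hδ : 0 < δ)
    (g g' : ℝ → ℝ)
    (hderiv : ∀ t ∈ Icc a b, HasDerivWithinAt g (g' t) (Icc a b) t)
    (hg' : ∀ t ∈ Icc a b, m ≤ |g' t|) :
    volume {t ∈ Icc a b | |g t - x| ≤ δ} ≤ ENNReal.ofReal (2 * δ / m) := by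
  set S : Set ℝ := {t ∈ Icc a b | |g t - x| ≤ δ} with hS
  -- key: for s t in S with t < s, s - t ≤ 2δ/m
  have hcont : ContinuousOn g (Icc a b) := fun t ht => (hderiv t ht).continuousWithinAt
  have key : ∀ s ∈ S, ∀ t ∈ S, t < s → s - t ≤ 2 * δ / m := by
    intro s hs t ht hts
    have hsI : s ∈ Icc a b := hs.1
    have htI : t ∈ Icc a b := ht.1
    have hsub : Icc t s ⊆ Icc a b := Icc_subset_Icc htI.1 hsI.2
    have hdiff : ∀ c ∈ Ioo t s, HasDerivAt g (g' c) c := by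
      intro c hc
      have hcI : c ∈ Ioo a b := ⟨lt_of_le_of_lt htI.1 hc.1, lt_of_lt_of_le hc.2 hsI.2⟩
      exact (hderiv c (Ioo_subset_Icc_self hcI)).hasDerivAt (Icc_mem_nhds hcI.1 hcI.2)
    obtain ⟨c, hc, hcd⟩ := exists_hasDerivAt_eq_slope g g' hts (hcont.mono hsub) hdiff
    have hcI : c ∈ Icc a b := Ioo_subset_Icc_self (⟨lt_of_le_of_lt htI.1 hc.1,
      lt_of_lt_of_le hc.2 hsI.2⟩ : c ∈ Ioo a b)
    have h1 : |g s - g t| ≤ 2 * δ := by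
      have := abs_sub_abs_le_abs_sub (g s - x) (g t - x)
      calc |g s - g t| = |(g s - x) - (g t - x)| := by ring_nf
        _ ≤ |g s - x| + |g t - x| := abs_sub _ _
        _ ≤ δ + δ := add_le_add hs.2 ht.2
        _ = 2 * δ := by ring
    have h2 : m * (s - t) ≤ |g s - g t| := by
      have : |g' c| * (s - t) = |g s - g t| := by
        rw [hcd, abs_div, abs_of_pos (by linarith : (0:ℝ) < s - t), div_mul_cancel₀]
        exact ne_of_gt (by linarith)
      rw [← this]
      exact mul_le_mul_of_nonneg_right (hg' c hcI) (by linarith)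
    rw [le_div_iff₀ hm]
    nlinarith
  -- handle S empty
  rcases S.eq_empty_or_nonempty with hE | ⟨t0, ht0⟩
  · rw [hE]; simp
  have hbdd : BddAbove S ∧ BddBelow S := by
    constructor
    · exact ⟨b, fun t ht => ht.1.2⟩
    · exact ⟨a, fun t ht => ht.1.1⟩
  have hdist : ∀ s ∈ S, ∀ t ∈ S, s - t ≤ 2 * δ / m := by
    intro s hs t ht
    rcases lt_trichotomy t s with h | h | h
    · exact key s hs t ht h
    · simp [h]; positivity
    · have := key t ht s hs h
      have : (0:ℝ) ≤ 2 * δ / m := by positivity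
      linarith
  have hsub : S ⊆ Icc (sInf S) (sSup S) :=
    fun t ht => ⟨csInf_le hbdd.2 ht, le_csSup hbdd.1 ht⟩
  calc volume S ≤ volume (Icc (sInf S) (sSup S)) := measure_mono hsub
    _ = ENNReal.ofReal (sSup S - sInf S) := by rw [Real.volume_Icc]
    _ ≤ ENNReal.ofReal (2 * δ / m) := by
        apply ENNReal.ofReal_le_ofReal
        have h1 : sSup S ≤ sInf S + 2 * δ / m := by
          apply csSup_le ⟨t0, ht0⟩
          intro s hs
          have : sInf S ≥ s - 2 * δ / m := by
            apply le_csInf ⟨t0, ht0⟩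
            intro t ht
            have := hdist s hs t ht
            linarith
          linarith
        linarith
end

section
/- Let r : ℝ → ℝ be continuously differentiable and let f : [a,b] → ℝ be differentiable with f'(t) = r(f(t)) for all t ∈ [a,b]. Then f is monotone on [a,b]; in particular, for any x ∈ ℝ with r(x) ≠ 0, there is at most one t ∈ [a,b] with f(t) = x. (Each smooth piece of a piecewise smooth process crosses a given level at most once, so the number of continuous crossings is bounded by the number of jumps plus one.) -/
open Set

/-- A solution of the autonomous scalar ODE `f' = r ∘ f` on a closed interval is monotone;
in particular, for any `x` with `r x ≠ 0`, the level `x` is attained at most once. -/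
theorem monotone_of_autonomous_ode
    (r : ℝ → ℝ) (hr : ContDiff ℝ 1 r)
    (a b : ℝ) (hab : a ≤ b) (f : ℝ → ℝ)
    (hf : ∀ t ∈ Icc a b, HasDerivWithinAt f (r (f t)) (Icc a b) t) :
    (MonotoneOn f (Icc a b) ∨ AntitoneOn f (Icc a b)) ∧
    (∀ x : ℝ, r x ≠ 0 →
      ∀ t₁ ∈ Icc a b, ∀ t₂ ∈ Icc a b, f t₁ = x → f t₂ = x → t₁ = t₂) := by
  have hfc : ContinuousOn f (Icc a b) := fun t ht => (hf t ht).continuousWithinAt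
  by_cases hz : ∃ t₀ ∈ Icc a b, r (f t₀) = 0
  · -- f passes through an equilibrium, hence is constant by uniqueness of solutions
    obtain ⟨t₀, ht₀, hrz⟩ := hz
    set c := f t₀ with hc
    -- a compact convex set containing the image of f
    obtain ⟨m, M, hmM⟩ : ∃ m M : ℝ, f '' Icc a b ⊆ Icc m M := by
      obtain ⟨C, hC⟩ := (isCompact_Icc.image_of_continuousOn hfc).isBounded.subset_closedBall 0
      refine ⟨-C, C, fun y hy => ?_⟩
      have := hC hy
      simp only [Metric.mem_closedBall, Real.dist_eq, sub_zero] at this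
      exact abs_le.1 this
    -- r is Lipschitz on Icc m M
    obtain ⟨C, hC⟩ := isCompact_Icc.exists_bound_of_continuousOn
      ((hr.continuous_deriv le_rfl).continuousOn (s := Icc m M))
    set K : NNReal := ⟨max C 0, le_max_right _ _⟩ with hK
    have hlip : LipschitzOnWith K r (Icc m M) := by
      apply Convex.lipschitzOnWith_of_nnnorm_deriv_le
        (fun x _ => (hr.differentiable one_ne_zero).differentiableAt) _ (convex_Icc m M)
      intro x hx
      have h1 := (hC x hx).trans (le_max_left C 0)
      rwa [← NNReal.coe_le_coe, coe_nnnorm] at *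
    have hv : ∀ _t : ℝ, LipschitzOnWith K (fun y => r y) (Icc m M) := fun _ => hlip
    have hmem : ∀ t ∈ Icc a b, f t ∈ Icc m M := fun t ht => hmM ⟨t, ht, rfl⟩
    have hcmem : c ∈ Icc m M := hmM ⟨t₀, ht₀, rfl⟩
    have hrc : r c = 0 := hrz
    -- f = c on [t₀, b]
    have hright : EqOn f (fun _ => c) (Icc t₀ b) := by
      refine ODE_solution_unique_of_mem_Icc_right (v := fun _ y => r y)
        (s := fun _ => Icc m M) (fun t _ => hv t)
        (hfc.mono (Icc_subset_Icc_left ht₀.1)) (fun t ht => ?_)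
        (fun t ht => hmem t ⟨ht₀.1.trans ht.1, ht.2.le⟩)
        continuousOn_const (fun t ht => ?_) (fun _ _ => hcmem) rfl
      · refine (hf t ⟨ht₀.1.trans ht.1, ht.2.le⟩).mono_of_mem_nhdsWithin ?_
        refine Filter.mem_of_superset
          (Filter.inter_mem self_mem_nhdsWithin
            (mem_nhdsWithin_of_mem_nhds (Iic_mem_nhds ht.2))) ?_
        rintro x ⟨hx1, hx2⟩
        exact ⟨(ht₀.1.trans ht.1).trans hx1, hx2⟩
      · simpa [hrc] using (hasDerivWithinAt_const t (Ici t) c)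
    -- f = c on [a, t₀]
    have hleft : EqOn f (fun _ => c) (Icc a t₀) := by
      refine ODE_solution_unique_of_mem_Icc_left (v := fun _ y => r y)
        (s := fun _ => Icc m M) (fun t _ => hv t)
        (hfc.mono (Icc_subset_Icc_right ht₀.2)) (fun t ht => ?_)
        (fun t ht => hmem t ⟨ht.1.le, ht.2.trans ht₀.2⟩)
        continuousOn_const (fun t ht => ?_) (fun _ _ => hcmem) rfl
      · refine (hf t ⟨ht.1.le, ht.2.trans ht₀.2⟩).mono_of_mem_nhdsWithin ?_
        refine Filter.mem_of_superset
          (Filter.inter_mem self_mem_nhdsWithin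
            (mem_nhdsWithin_of_mem_nhds (Ici_mem_nhds ht.1))) ?_
        rintro x ⟨hx1, hx2⟩
        exact ⟨hx2, hx1.trans (ht.2.trans ht₀.2)⟩
      · simpa [hrc] using (hasDerivWithinAt_const t (Iic t) c)
    have heq : EqOn f (fun _ => c) (Icc a b) := by
      rw [← Icc_union_Icc_eq_Icc ht₀.1 ht₀.2]
      exact hleft.union hright
    constructor
    · exact Or.inl (fun x hx y hy _ => by rw [heq hx, heq hy])
    · intro x hx t₁ ht₁ t₂ ht₂ h1 h2
      exact absurd (by rw [← h1, heq ht₁, hrc]) hx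
  · -- r ∘ f never vanishes: constant sign, f strictly monotone
    push_neg at hz
    have hcont : ContinuousOn (fun t => r (f t)) (Icc a b) :=
      hr.continuous.comp_continuousOn hfc
    have hd : ∀ t ∈ interior (Icc a b), HasDerivAt f (r (f t)) t := by
      intro t ht
      rw [interior_Icc] at ht
      exact (hf t (Ioo_subset_Icc_self ht)).hasDerivAt (Icc_mem_nhds ht.1 ht.2)
    have hsign : (∀ t ∈ Icc a b, 0 < r (f t)) ∨ (∀ t ∈ Icc a b, r (f t) < 0) := by
      by_contra h
      push_neg at h
      obtain ⟨⟨t₁, ht₁, h1⟩, ⟨t₂, ht₂, h2⟩⟩ := h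
      have h1' : r (f t₁) < 0 := lt_of_le_of_ne h1 (hz t₁ ht₁)
      have h2' : 0 < r (f t₂) := lt_of_le_of_ne h2 (Ne.symm (hz t₂ ht₂))
      have hsub : uIcc t₁ t₂ ⊆ Icc a b := Set.ordConnected_Icc.uIcc_subset ht₁ ht₂
      have h0 : (0 : ℝ) ∈ uIcc (r (f t₁)) (r (f t₂)) := by
        rw [mem_uIcc]
        exact Or.inl ⟨h1'.le, h2'.le⟩
      obtain ⟨t, htm, ht0⟩ := intermediate_value_uIcc (hcont.mono hsub) h0
      exact hz t (hsub htm) ht0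
    rcases hsign with hpos | hneg
    · have hmono : StrictMonoOn f (Icc a b) := by
        refine strictMonoOn_of_deriv_pos (convex_Icc a b) hfc (fun t ht => ?_)
        rw [(hd t ht).deriv]
        exact hpos t (interior_subset ht)
      exact ⟨Or.inl hmono.monotoneOn,
        fun x hx t₁ ht₁ t₂ ht₂ h1 h2 => hmono.injOn ht₁ ht₂ (h1.trans h2.symm)⟩
    · have hmono : StrictAntiOn f (Icc a b) := by
        refine strictAntiOn_of_deriv_neg (convex_Icc a b) hfc (fun t ht => ?_)
        rw [(hd t ht).deriv]
        exact hneg t (interior_subset ht)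
      exact ⟨Or.inr hmono.antitoneOn,
        fun x hx t₁ ht₁ t₂ ht₂ h1 h2 => hmono.injOn ht₁ ht₂ (h1.trans h2.symm)⟩
end

section
/- Let H > 0, x ∈ ℝ, let r : ℝ → ℝ be continuously differentiable with r(x) ≠ 0, and let f : [0,H] → ℝ be a piecewise C¹ path with jump times 0 = t₀ < t₁ < ⋯ < t_k < t_{k+1} = H which is a piecewise integral curve of r and avoids the level x at endpoints and jumps. Then the local time l_x(H)(f) = lim_{δ→0⁺} (1/(2δ)) ∫₀^H 1_{|f(t)−x|≤δ} dt exists, the continuous crossing set C_x(f) is finite, and card C_x(f) = |r(x)| · l_x(H)(f). (Pathwise form of the local time–crossing relation, Theorem 2.) -/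
open MeasureTheory Filter Set Topology

open scoped ENNReal

lemma ltc_finite (a b c x : ℝ) (hc : c ≠ 0) (g : ℝ → ℝ)
    (hg : ContinuousOn g (Icc a b))
    (hz : ∀ s ∈ Icc a b, g s = x → s ∈ Ioo a b ∧ HasDerivAt g c s) :
    {s | s ∈ Icc a b ∧ g s = x}.Finite := by
  have hZclosed : IsClosed {s | s ∈ Icc a b ∧ g s = x} := by
    have h : {s | s ∈ Icc a b ∧ g s = x} = Icc a b ∩ g ⁻¹' {x} := by
      ext s; simp [Set.mem_inter_iff]
    rw [h]
    exact hg.preimage_isClosed_of_isClosed isClosed_Icc isClosed_singleton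
  have hZcomp : IsCompact {s | s ∈ Icc a b ∧ g s = x} :=
    isCompact_Icc.of_isClosed_subset hZclosed (fun s hs => hs.1)
  refine hZcomp.finite ?_
  rw [isDiscrete_iff_discreteTopology, discreteTopology_subtype_iff]
  intro s hs
  have hd := (hz s hs.1 hs.2).2
  have h1 : ∀ᶠ t in 𝓝[≠] s, g t ≠ g s := hd.eventually_ne hc
  have h2 : {t | g t ≠ g s} ∩ {s' | s' ∈ Icc a b ∧ g s' = x} ∈
      𝓝[≠] s ⊓ 𝓟 {s' | s' ∈ Icc a b ∧ g s' = x} :=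
    inter_mem (mem_inf_of_left h1) (mem_inf_of_right (mem_principal_self _))
  rw [← empty_mem_iff_bot]
  convert h2 using 1
  ext t
  simp only [mem_empty_iff_false, mem_inter_iff, mem_setOf_eq, false_iff]
  rintro ⟨ht, _, htx⟩
  exact ht (htx.trans hs.2.symm)

lemma ltc_tendsto (a b c x : ℝ) (hc : c ≠ 0) (g : ℝ → ℝ)
    (hg : ContinuousOn g (Icc a b))
    (hz : ∀ s ∈ Icc a b, g s = x → s ∈ Ioo a b ∧ HasDerivAt g c s) :
    Tendsto (fun δ : ℝ => (volume {s | s ∈ Icc a b ∧ |g s - x| ≤ δ}).toReal / (2*δ))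
      (𝓝[>] (0:ℝ)) (𝓝 (({s | s ∈ Icc a b ∧ g s = x}).ncard / |c|)) := by
  classical
  have hZfin : {s | s ∈ Icc a b ∧ g s = x}.Finite := ltc_finite a b c x hc g hg hz
  set ZF : Finset ℝ := hZfin.toFinset with hZFdef
  have hNcard : ({s | s ∈ Icc a b ∧ g s = x}).ncard = ZF.card :=
    Set.ncard_eq_toFinset_card _ hZfin
  have hcpos : 0 < |c| := abs_pos.2 hc
  set N : ℝ := (ZF.card : ℝ) with hNdef
  have hN0 : 0 ≤ N := Nat.cast_nonneg _
  rw [Metric.tendsto_nhds]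
  intro ε' hε'
  set ε : ℝ := min (|c|/2) (ε' * |c|^2 / (4*(N+1))) with hεdef
  have hεpos : 0 < ε := lt_min (by positivity) (by positivity)
  have hεc : ε ≤ |c|/2 := min_le_left _ _
  have hcε : 0 < |c| - ε := by linarith
  have hε3 : ε * (4*(N+1)) ≤ ε' * |c|^2 := by
    have := min_le_right (|c|/2) (ε' * |c|^2 / (4*(N+1)))
    rw [← hεdef] at this
    rw [← le_div_iff₀ (by positivity)]
    exact this
  -- choose η
  have hηev : ∀ᶠ η in 𝓝[>] (0:ℝ),
      ((∀ s ∈ ZF, (a < s - η ∧ s + η < b) ∧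
        ∀ t, |t - s| ≤ η → |g t - x - c*(t-s)| ≤ ε * |t - s|) ∧
      (∀ s ∈ ZF, ∀ s' ∈ ZF, s ≠ s' → 3*η ≤ |s - s'|)) := by
    refine Eventually.and ?_ ?_
    · rw [eventually_all_finset]
      intro s hsF
      have hsZ : s ∈ {s | s ∈ Icc a b ∧ g s = x} := hZfin.mem_toFinset.1 hsF
      obtain ⟨hsIoo, hd⟩ := hz s hsZ.1 hsZ.2
      have hlo : ∀ᶠ t in 𝓝 s, |g t - x - c*(t-s)| ≤ ε * |t - s| := by
        have h1 := (hasDerivAt_iff_isLittleO.1 hd).def hεpos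
        filter_upwards [h1] with t ht
        simpa [Real.norm_eq_abs, hsZ.2, smul_eq_mul, mul_comm] using ht
      rw [Metric.eventually_nhds_iff] at hlo
      obtain ⟨η0, hη0pos, hη0⟩ := hlo
      have h2 : Ioo (0:ℝ) (min η0 (min (s-a) (b-s))) ∈ 𝓝[>] (0:ℝ) :=
        Ioo_mem_nhdsGT_of_mem ⟨le_refl 0, by
          refine lt_min hη0pos (lt_min ?_ ?_) <;> [linarith [hsIoo.1]; linarith [hsIoo.2]]⟩
      filter_upwards [eventually_mem_nhdsWithin, h2] with η hη hηmem
      obtain ⟨hη1, hη2⟩ := hηmem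
      refine ⟨⟨?_, ?_⟩, ?_⟩
      · have := lt_of_lt_of_le hη2 ((min_le_right _ _).trans (min_le_left _ _)); linarith
      · have := lt_of_lt_of_le hη2 ((min_le_right _ _).trans (min_le_right _ _)); linarith
      · intro t ht
        have : dist t s < η0 := by
          rw [Real.dist_eq]
          exact lt_of_le_of_lt ht (lt_of_lt_of_le hη2 (min_le_left _ _))
        exact hη0 this
    · rw [eventually_all_finset]
      intro s hs
      rw [eventually_all_finset]
      intro s' hs'
      by_cases h : s = s'
      · exact Eventually.of_forall fun η hne => absurd h hne
      · have hpos : 0 < |s - s'| := abs_pos.2 (sub_ne_zero.2 h)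
        have h2 : Ioo (0:ℝ) (|s-s'|/3) ∈ 𝓝[>] (0:ℝ) :=
          Ioo_mem_nhdsGT_of_mem ⟨le_refl 0, by positivity⟩
        filter_upwards [h2] with η hη _
        linarith [hη.2]
  obtain ⟨η, ⟨hη1, hη2⟩, hηpos'⟩ := (hηev.and eventually_mem_nhdsWithin).exists
  have hηpos : 0 < η := hηpos'
  -- minimum away from zeros
  set K : Set ℝ := Icc a b \ ⋃ s ∈ ZF, Ioo (s-η) (s+η) with hKdef
  have hKcomp : IsCompact K := isCompact_Icc.diff (isOpen_biUnion fun _ _ => isOpen_Ioo)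
  have hm : ∃ m > 0, ∀ t ∈ K, m ≤ |g t - x| := by
    rcases K.eq_empty_or_nonempty with hKe | hKne
    · exact ⟨1, one_pos, fun t ht => by rw [hKe] at ht; exact absurd ht (notMem_empty t)⟩
    · have hgK : ContinuousOn (fun t => |g t - x|) K :=
        ((hg.mono diff_subset).sub continuousOn_const).abs
      obtain ⟨t0, ht0K, ht0min⟩ := hKcomp.exists_isMinOn hKne hgK
      refine ⟨|g t0 - x|, ?_, fun t ht => ht0min ht⟩
      rcases lt_or_eq_of_le (abs_nonneg (g t0 - x)) with h | h
      · exact h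
      · exfalso
        have hgt0 : g t0 = x := by
          have := abs_eq_zero.1 h.symm; linarith [this]
        have ht0Z : t0 ∈ ZF := hZfin.mem_toFinset.2 ⟨ht0K.1, hgt0⟩
        exact ht0K.2 (mem_biUnion ht0Z ⟨by linarith, by linarith⟩)
  obtain ⟨m, hmpos, hmK⟩ := hm
  -- main estimate
  have hub : 0 < min m (η * (|c| - ε)) := lt_min hmpos (by positivity)
  have hmem : Ioo (0:ℝ) (min m (η * (|c| - ε))) ∈ 𝓝[>] (0:ℝ) :=
    Ioo_mem_nhdsGT_of_mem ⟨le_refl 0, hub⟩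
  filter_upwards [hmem] with δ hδ
  obtain ⟨hδpos, hδlt⟩ := hδ
  have hδm : δ < m := lt_of_lt_of_le hδlt (min_le_left _ _)
  have hδη : δ < η * (|c| - ε) := lt_of_lt_of_le hδlt (min_le_right _ _)
  set S : Set ℝ := {s | s ∈ Icc a b ∧ |g s - x| ≤ δ} with hSdef
  -- upper bound
  have hSsub : S ⊆ ⋃ s ∈ ZF, Icc (s - δ/(|c|-ε)) (s + δ/(|c|-ε)) := by
    intro t ht
    have htK : t ∉ K := by
      intro hK
      have := hmK t hK
      linarith [ht.2]
    have htU : t ∈ ⋃ s ∈ ZF, Ioo (s-η) (s+η) := by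
      by_contra h
      exact htK ⟨ht.1, h⟩
    obtain ⟨s, hsF, hts⟩ := mem_iUnion₂.1 htU
    have hts' : |t - s| ≤ η := by
      rw [abs_le]; constructor <;> [linarith [hts.1]; linarith [hts.2]]
    have hest := (hη1 s hsF).2 t hts'
    have h1 : |c| * |t - s| ≤ |g t - x| + ε * |t-s| := by
      have heq : c*(t-s) = (g t - x) - (g t - x - c*(t-s)) := by ring
      calc |c| * |t - s| = |c*(t-s)| := (abs_mul c (t-s)).symm
      _ = |(g t - x) - (g t - x - c*(t-s))| := by rw [← heq]
      _ ≤ |g t - x| + |g t - x - c*(t-s)| := abs_sub _ _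
      _ ≤ |g t - x| + ε * |t - s| := by linarith
    have h2 : |t - s| ≤ δ/(|c|-ε) := by
      rw [le_div_iff₀ hcε]
      nlinarith [ht.2, abs_nonneg (t-s)]
    rw [abs_le] at h2
    exact mem_biUnion hsF ⟨by linarith [h2.1], by linarith [h2.2]⟩
  have hup : volume S ≤ (ZF.card : ℝ≥0∞) * ENNReal.ofReal (2*(δ/(|c|-ε))) := by
    calc volume S ≤ ∑ s ∈ ZF, volume (Icc (s - δ/(|c|-ε)) (s + δ/(|c|-ε))) :=
        (measure_mono hSsub).trans (measure_biUnion_finset_le _ _)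
    _ = ∑ _s ∈ ZF, ENNReal.ofReal (2*(δ/(|c|-ε))) := by
        refine Finset.sum_congr rfl fun s _ => ?_
        rw [Real.volume_Icc]
        congr 1 <;> ring
    _ = (ZF.card : ℝ≥0∞) * ENNReal.ofReal (2*(δ/(|c|-ε))) := by
        rw [Finset.sum_const, nsmul_eq_mul]
  -- lower bound
  set ρ : ℝ := δ/(|c|+ε) with hρdef
  have hcεpos : 0 < |c| + ε := by linarith
  have hρpos : 0 < ρ := by positivity
  have hρη : ρ < η := by
    rw [hρdef, div_lt_iff₀ hcεpos]
    nlinarith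
  have hlsub : ∀ s ∈ ZF, Icc (s-ρ) (s+ρ) ⊆ S := by
    intro s hsF t ht
    have hts : |t - s| ≤ ρ := by
      rw [abs_le]; constructor <;> [linarith [ht.1]; linarith [ht.2]]
    have htsη : |t - s| ≤ η := hts.trans hρη.le
    have hest := (hη1 s hsF).2 t htsη
    refine ⟨⟨?_, ?_⟩, ?_⟩
    · have := (hη1 s hsF).1.1; linarith [ht.1]
    · have := (hη1 s hsF).1.2; linarith [ht.2]
    · have heq : g t - x = c*(t-s) + (g t - x - c*(t-s)) := by ring
      have h1 : |g t - x| ≤ |c| * |t - s| + ε * |t - s| := by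
        calc |g t - x| = |c*(t-s) + (g t - x - c*(t-s))| := by rw [← heq]
        _ ≤ |c*(t-s)| + |g t - x - c*(t-s)| := abs_add_le _ _
        _ ≤ |c| * |t - s| + ε * |t - s| := by rw [abs_mul]; linarith
      have h2 : (|c|+ε)*ρ = δ := by
        rw [hρdef, mul_comm, div_mul_cancel₀ _ (ne_of_gt hcεpos)]
      have h3 : (|c|+ε) * |t - s| ≤ (|c|+ε) * ρ := mul_le_mul_of_nonneg_left hts (le_of_lt hcεpos)
      linarith only [h1, h2, h3]
  have hdisj : (↑ZF : Set ℝ).PairwiseDisjoint (fun s => Icc (s-ρ) (s+ρ)) := by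
    intro s hs s' hs' hne
    rw [Function.onFun]
    rw [Set.disjoint_left]
    intro t ht ht'
    have h3 := hη2 s (Finset.mem_coe.1 hs) s' (Finset.mem_coe.1 hs') hne
    have h1 : |s - t| ≤ ρ := by rw [abs_le]; constructor <;> [linarith [ht.2]; linarith [ht.1]]
    have h2 : |t - s'| ≤ ρ := by rw [abs_le]; constructor <;> [linarith [ht'.1]; linarith [ht'.2]]
    have := abs_sub_le s t s'
    linarith
  have hlow : (ZF.card : ℝ≥0∞) * ENNReal.ofReal (2*ρ) ≤ volume S := by
    calc (ZF.card : ℝ≥0∞) * ENNReal.ofReal (2*ρ)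
        = ∑ s ∈ ZF, volume (Icc (s-ρ) (s+ρ)) := by
          rw [Finset.sum_congr rfl fun s _ => show volume (Icc (s-ρ) (s+ρ)) = ENNReal.ofReal (2*ρ) by rw [Real.volume_Icc]; congr 1 <;> ring]
          rw [Finset.sum_const, nsmul_eq_mul]
    _ = volume (⋃ s ∈ ZF, Icc (s-ρ) (s+ρ)) :=
        (measure_biUnion_finset hdisj (fun _ _ => measurableSet_Icc)).symm
    _ ≤ volume S := measure_mono (iUnion₂_subset hlsub)
  -- convert to real
  have hSfin : volume S ≠ ⊤ := by
    refine ne_top_of_le_ne_top ?_ (measure_mono (fun t ht => ht.1))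
    rw [Real.volume_Icc]; exact ENNReal.ofReal_ne_top
  have hupR : (volume S).toReal ≤ N * (2*(δ/(|c|-ε))) := by
    have h := ENNReal.toReal_mono (ENNReal.mul_ne_top (ENNReal.natCast_ne_top _) ENNReal.ofReal_ne_top) hup
    rwa [ENNReal.toReal_mul, ENNReal.toReal_natCast,
      ENNReal.toReal_ofReal (by positivity)] at h
  have hlowR : N * (2*ρ) ≤ (volume S).toReal := by
    have h := ENNReal.toReal_mono hSfin hlow
    have hρ2 : (0:ℝ) ≤ 2*ρ := by linarith
    rwa [ENNReal.toReal_mul, ENNReal.toReal_natCast,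
      ENNReal.toReal_ofReal hρ2] at h
  -- arithmetic
  set V : ℝ := (volume S).toReal with hVdef
  have hV0 : 0 ≤ V := ENNReal.toReal_nonneg
  rw [Real.dist_eq, abs_lt]
  have hkey : N * ε < ε' * (|c| - ε) * |c| := by
    have h2 : ε' * (ε * |c|) ≤ ε' * ((|c|/2) * |c|) :=
      mul_le_mul_of_nonneg_left (mul_le_mul_of_nonneg_right hεc (abs_nonneg c)) (le_of_lt hε')
    have h3 : 0 ≤ N * ε := mul_nonneg hN0 (le_of_lt hεpos)
    linarith only [hε3, h2, h3, hεpos]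
  constructor
  · -- -ε' < V/(2δ) - N/|c|
    have hkey2 : N * ε < ε' * (|c| + ε) * |c| := by
      have h5 : 0 ≤ ε' * ε * |c| := mul_nonneg (mul_nonneg (le_of_lt hε') (le_of_lt hεpos)) (abs_nonneg c)
      linarith only [hkey, h5]
    have hb1 : N/|c| - ε' < N/(|c|+ε) := by
      rw [div_sub' (ne_of_gt hcpos), div_lt_div_iff₀ hcpos hcεpos]
      linarith only [hkey2]
    have hb2 : N/(|c|+ε) ≤ V/(2*δ) := by
      rw [div_le_div_iff₀ hcεpos (by positivity)]
      have e : (2*ρ)*(|c|+ε) = 2*δ := by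
        rw [hρdef, mul_assoc, div_mul_cancel₀ _ (ne_of_gt hcεpos)]
      have e2 : N*((2*ρ)*(|c|+ε)) = N*(2*δ) := by rw [e]
      have h4 := mul_le_mul_of_nonneg_right hlowR (le_of_lt hcεpos)
      linarith only [h4, e2]
    rw [hNcard, show ((ZF.card:ℕ):ℝ) = N from hNdef.symm]
    linarith only [hb1, hb2]
  · -- V/(2δ) - N/|c| < ε'
    have hb2 : V/(2*δ) ≤ N/(|c|-ε) := by
      rw [div_le_div_iff₀ (by positivity) hcε]
      have e : (2*(δ/(|c|-ε)))*(|c|-ε) = 2*δ := by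
        rw [mul_assoc, div_mul_cancel₀ _ (ne_of_gt hcε)]
      have e2 : N*((2*(δ/(|c|-ε)))*(|c|-ε)) = N*(2*δ) := by rw [e]
      have h4 := mul_le_mul_of_nonneg_right hupR (le_of_lt hcε)
      linarith only [h4, e2]
    have hb1 : N/(|c|-ε) < N/|c| + ε' := by
      rw [← sub_lt_iff_lt_add', div_sub_div _ _ (ne_of_gt hcε) (ne_of_gt hcpos),
        div_lt_iff₀ (by positivity)]
      linarith only [hkey]
    rw [hNcard, show ((ZF.card:ℕ):ℝ) = N from hNdef.symm]
    linarith only [hb1, hb2]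

lemma ltc_ncard_biUnion (I : Finset ℕ) (Z : ℕ → Set ℝ) (hfin : ∀ i ∈ I, (Z i).Finite)
    (hdisj : (↑I : Set ℕ).PairwiseDisjoint Z) :
    (⋃ i ∈ I, Z i).ncard = ∑ i ∈ I, (Z i).ncard := by
  classical
  induction I using Finset.induction_on with
  | empty => simp
  | @insert a I' ha ih =>
    rw [Finset.set_biUnion_insert, Finset.sum_insert ha]
    have hfin' : ∀ i ∈ I', (Z i).Finite := fun i hi => hfin i (Finset.mem_insert_of_mem hi)
    have hdisj' : (↑I' : Set ℕ).PairwiseDisjoint Z :=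
      hdisj.subset (by intro i hi; exact Finset.mem_coe.2 (Finset.mem_insert_of_mem (Finset.mem_coe.1 hi)))
    rw [← ih hfin' hdisj']
    refine Set.ncard_union_eq ?_ (hfin a (Finset.mem_insert_self a I'))
      (Set.Finite.biUnion I'.finite_toSet hfin')
    rw [Set.disjoint_iUnion₂_right]
    intro i hi
    exact hdisj (Finset.mem_coe.2 (Finset.mem_insert_self a I'))
      (Finset.mem_coe.2 (Finset.mem_insert_of_mem hi)) (by rintro rfl; exact ha hi)

/-- **Pathwise local time–crossing relation (Theorem 2, pathwise form).**
For a piecewise integral curve `f` of a C¹ vector field `r` with `r x ≠ 0`, avoiding the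
level `x` at endpoints and jumps, the local time at `x` exists, the continuous crossing set
is finite, and `card C_x(f) = |r(x)| ⬝ l_x(H)(f)`. -/
theorem local_time_crossing_relation_pathwise
    (H x : ℝ) (hH : 0 < H)
    (r : ℝ → ℝ) (hr : ContDiff ℝ 1 r) (hrx : r x ≠ 0)
    (k : ℕ) (τ : ℕ → ℝ) (g : ℕ → ℝ → ℝ) (f : ℝ → ℝ)
    (hτ0 : τ 0 = 0) (hτH : τ (k+1) = H)
    (hτmono : ∀ i ≤ k, τ i < τ (i+1))
    (hderiv : ∀ i ≤ k, ∀ s ∈ Icc (τ i) (τ (i+1)),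
      HasDerivWithinAt (g i) (r (g i s)) (Icc (τ i) (τ (i+1))) s)
    (hfg : ∀ i ≤ k, ∀ s ∈ Ico (τ i) (τ (i+1)), f s = g i s)
    (hfH : f H = g k H)
    (havoid : ∀ i ≤ k, g i (τ i) ≠ x ∧ g i (τ (i+1)) ≠ x) :
    (crossSet H x f).Finite ∧
    ∃ l : ℝ,
      Tendsto
        (fun δ : ℝ => (1 / (2 * δ)) *
          ∫ s in Icc (0:ℝ) H, ({u : ℝ | |f u - x| ≤ δ}.indicator (fun _ => (1:ℝ)) s))
        (𝓝[>] (0:ℝ)) (𝓝 l) ∧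
      ((crossSet H x f).ncard : ℝ) = |r x| * l := by
  classical
  have hcpos : 0 < |r x| := abs_pos.2 hrx
  -- monotonicity of jump times
  have hτlt : ∀ j ≤ k+1, ∀ i < j, τ i < τ j := by
    intro j
    induction j with
    | zero => intro _ i hi; omega
    | succ n ih =>
      intro hj i hi
      have hn : n ≤ k := by omega
      rcases Nat.lt_succ_iff_lt_or_eq.1 hi with h | h
      · exact (ih (by omega) i h).trans (hτmono n hn)
      · subst h; exact hτmono i hn
  have hτle : ∀ i j, i ≤ j → j ≤ k+1 → τ i ≤ τ j := by
    intro i j hij hj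
    rcases eq_or_lt_of_le hij with rfl | h
    · exact le_refl _
    · exact (hτlt j hj i h).le
  have hgcont : ∀ i ≤ k, ContinuousOn (g i) (Icc (τ i) (τ (i+1))) :=
    fun i hi s hs => (hderiv i hi s hs).continuousWithinAt
  have hzi : ∀ i ≤ k, ∀ s ∈ Icc (τ i) (τ (i+1)), g i s = x →
      s ∈ Ioo (τ i) (τ (i+1)) ∧ HasDerivAt (g i) (r x) s := by
    intro i hi s hs hgs
    have h1 : s ≠ τ i := fun h => (havoid i hi).1 (h ▸ hgs)
    have h2 : s ≠ τ (i+1) := fun h => (havoid i hi).2 (h ▸ hgs)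
    have hsIoo : s ∈ Ioo (τ i) (τ (i+1)) :=
      ⟨lt_of_le_of_ne hs.1 (Ne.symm h1), lt_of_le_of_ne hs.2 h2⟩
    refine ⟨hsIoo, ?_⟩
    have hd := hderiv i hi s hs
    rw [hgs] at hd
    exact hd.hasDerivAt (Icc_mem_nhds hsIoo.1 hsIoo.2)
  set Z : ℕ → Set ℝ := fun i => {s | s ∈ Icc (τ i) (τ (i+1)) ∧ g i s = x} with hZdef
  have hZfin : ∀ i ≤ k, (Z i).Finite :=
    fun i hi => ltc_finite _ _ (r x) x hrx (g i) (hgcont i hi) (hzi i hi)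
  have hZten : ∀ i ≤ k, Tendsto
      (fun δ : ℝ => (volume {s | s ∈ Icc (τ i) (τ (i+1)) ∧ |g i s - x| ≤ δ}).toReal / (2*δ))
      (𝓝[>] (0:ℝ)) (𝓝 ((Z i).ncard / |r x|)) :=
    fun i hi => ltc_tendsto _ _ (r x) x hrx (g i) (hgcont i hi) (hzi i hi)
  -- covering of [0,H)
  have hcover : ∀ t, 0 ≤ t → t < H → ∃ i ≤ k, τ i ≤ t ∧ t < τ (i+1) := by
    intro t ht0 htH
    have hPi : τ (Nat.findGreatest (fun j => τ j ≤ t) k) ≤ t :=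
      Nat.findGreatest_spec (P := fun j => τ j ≤ t) (Nat.zero_le k) (show τ 0 ≤ t by rw [hτ0]; exact ht0)
    have hik : Nat.findGreatest (fun j => τ j ≤ t) k ≤ k := Nat.findGreatest_le k
    refine ⟨Nat.findGreatest (fun j => τ j ≤ t) k, hik, hPi, ?_⟩
    by_cases h : Nat.findGreatest (fun j => τ j ≤ t) k = k
    · rw [h, hτH]; exact htH
    · by_contra hcon
      push_neg at hcon
      have := Nat.le_findGreatest (P := fun j => τ j ≤ t) (n := k) (m := Nat.findGreatest (fun j => τ j ≤ t) k + 1) (by omega) hcon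
      omega
  -- identification of the crossing set
  have hcrossEq : crossSet H x f = ⋃ i ∈ Finset.range (k+1), Z i := by
    ext s
    simp only [crossSet, mem_setOf_eq, mem_iUnion, Finset.mem_range, exists_prop]
    constructor
    · rintro ⟨hs0H, _hcont, hfs⟩
      obtain ⟨i, hik, h1, h2⟩ := hcover s hs0H.1.le hs0H.2
      have hfs' : g i s = x := by rw [← hfg i hik s ⟨h1, h2⟩]; exact hfs
      exact ⟨i, by omega, ⟨⟨h1, h2.le⟩, hfs'⟩⟩
    · rintro ⟨i, hik', hsIcc, hgsx⟩
      have hik : i ≤ k := by omega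
      have hsIoo : s ∈ Ioo (τ i) (τ (i+1)) := (hzi i hik s hsIcc hgsx).1
      have h0s : 0 < s := by
        have h := hτle 0 i (Nat.zero_le i) (by omega)
        rw [hτ0] at h
        linarith [hsIoo.1]
      have hsH : s < H := by
        have h := hτle (i+1) (k+1) (by omega) (le_refl _)
        rw [hτH] at h
        linarith [hsIoo.2]
      have hev : f =ᶠ[𝓝 s] g i :=
        eventually_of_mem (Ioo_mem_nhds hsIoo.1 hsIoo.2)
          (fun t ht => hfg i hik t ⟨ht.1.le, ht.2⟩)
      have hgc : ContinuousAt (g i) s :=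
        (hgcont i hik).continuousAt (Icc_mem_nhds hsIoo.1 hsIoo.2)
      exact ⟨⟨h0s, hsH⟩, hgc.congr hev.symm, by rw [hev.self_of_nhds]; exact hgsx⟩
  -- pairwise disjointness
  have hZkey : ∀ i j, i < j → j ≤ k → Disjoint (Z i) (Z j) := by
    intro i j hij hj
    rw [Set.disjoint_left]
    intro t hti htj
    have h1 := (hzi i (by omega) t hti.1 hti.2).1.2
    have h2 : τ j ≤ t := htj.1.1
    have h3 : τ (i+1) ≤ τ j := hτle (i+1) j (by omega) (by omega)
    linarith
  have hZdisj : (↑(Finset.range (k+1)) : Set ℕ).PairwiseDisjoint Z := by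
    intro i hi j hj hne
    have hi' : i ≤ k := by have := Finset.mem_range.1 (Finset.mem_coe.1 hi); omega
    have hj' : j ≤ k := by have := Finset.mem_range.1 (Finset.mem_coe.1 hj); omega
    rcases lt_or_gt_of_ne hne with h | h
    · exact hZkey i j h hj'
    · exact (hZkey j i h hi').symm
  have hfinite : (crossSet H x f).Finite := by
    rw [hcrossEq, ← Finset.set_biUnion_coe]
    exact Set.Finite.biUnion (Finset.range (k+1)).finite_toSet
      (fun i hi => hZfin i (by have := Finset.mem_range.1 (Finset.mem_coe.1 hi); omega))
  have hNsum : (crossSet H x f).ncard = ∑ i ∈ Finset.range (k+1), (Z i).ncard := by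
    rw [hcrossEq]
    exact ltc_ncard_biUnion _ _
      (fun i hi => hZfin i (by have := Finset.mem_range.1 hi; omega)) hZdisj
  -- the integral identity
  have hInt : ∀ δ : ℝ,
      (∫ s in Icc (0:ℝ) H, ({u : ℝ | |f u - x| ≤ δ}.indicator (fun _ => (1:ℝ)) s))
        = ∑ i ∈ Finset.range (k+1),
            (volume {s | s ∈ Icc (τ i) (τ (i+1)) ∧ |g i s - x| ≤ δ}).toReal := by
    intro δ
    set A := {u : ℝ | |f u - x| ≤ δ} with hAdef
    set B : ℕ → Set ℝ := fun i => {s | s ∈ Icc (τ i) (τ (i+1)) ∧ |g i s - x| ≤ δ} with hBdef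
    set Ai : ℕ → Set ℝ := fun i => {s | s ∈ Ico (τ i) (τ (i+1)) ∧ |g i s - x| ≤ δ} with hAidef
    have hBclosed : ∀ i ≤ k, IsClosed (B i) := by
      intro i hi
      have he : B i = Icc (τ i) (τ (i+1)) ∩ (fun s => |g i s - x|) ⁻¹' (Iic δ) := rfl
      rw [he]
      exact (((hgcont i hi).sub continuousOn_const).abs).preimage_isClosed_of_isClosed
        isClosed_Icc isClosed_Iic
    have hAim : ∀ i ≤ k, MeasurableSet (Ai i) := by
      intro i hi
      have he : Ai i = B i ∩ Ico (τ i) (τ (i+1)) := by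
        ext t
        simp only [hAidef, hBdef, mem_setOf_eq, mem_inter_iff]
        constructor
        · rintro ⟨h1, h2⟩; exact ⟨⟨⟨h1.1, h1.2.le⟩, h2⟩, h1⟩
        · rintro ⟨⟨_, h2⟩, h1⟩; exact ⟨h1, h2⟩
      rw [he]
      exact ((hBclosed i hi).measurableSet).inter measurableSet_Ico
    have hAIcc : A ∩ Icc 0 H = (⋃ i ∈ Finset.range (k+1), Ai i) ∪ (A ∩ {H}) := by
      ext t
      constructor
      · rintro ⟨htA, ht0H⟩
        by_cases hH' : t = H
        · exact Or.inr ⟨htA, hH'⟩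
        · obtain ⟨i, hik, h1, h2⟩ := hcover t ht0H.1 (lt_of_le_of_ne ht0H.2 hH')
          refine Or.inl (mem_biUnion (Finset.mem_range.2 (by omega)) ⟨⟨h1, h2⟩, ?_⟩)
          rw [← hfg i hik t ⟨h1, h2⟩]; exact htA
      · rintro (ht | ⟨htA, htH⟩)
        · rw [mem_iUnion₂] at ht
          obtain ⟨i, hi, hIco, hgb⟩ := ht
          have hik : i ≤ k := by have := Finset.mem_range.1 hi; omega
          have hτi0 : (0:ℝ) ≤ τ i := by rw [← hτ0]; exact hτle 0 i (Nat.zero_le i) (by omega)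
          have hτiH : τ (i+1) ≤ H := by rw [← hτH]; exact hτle (i+1) (k+1) (by omega) (le_refl _)
          refine ⟨?_, ⟨le_trans hτi0 hIco.1, le_trans hIco.2.le hτiH⟩⟩
          rw [hAdef, mem_setOf_eq, hfg i hik t hIco]
          exact hgb
        · rw [mem_singleton_iff] at htH
          subst htH
          exact ⟨htA, ⟨hH.le, le_refl _⟩⟩
    have hAmeas : MeasurableSet (A ∩ Icc 0 H) := by
      rw [hAIcc]
      refine MeasurableSet.union ?_ (Set.Subsingleton.measurableSet ?_)
      · exact Finset.measurableSet_biUnion _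
          (fun i hi => hAim i (by have := Finset.mem_range.1 hi; omega))
      · intro u hu v hv
        have hu2 : u = H := hu.2
        have hv2 : v = H := hv.2
        rw [hu2, hv2]
    have h1 : (∫ s in Icc (0:ℝ) H, A.indicator (fun _ => (1:ℝ)) s)
        = ∫ s in Icc (0:ℝ) H, (A ∩ Icc 0 H).indicator (fun _ => (1:ℝ)) s := by
      refine setIntegral_congr_fun measurableSet_Icc (fun s hs => ?_)
      by_cases hsA : s ∈ A
      · rw [Set.indicator_of_mem hsA, Set.indicator_of_mem (mem_inter hsA hs)]
      · rw [Set.indicator_of_notMem hsA, Set.indicator_of_notMem (fun h => hsA h.1)]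
    have h2 : (∫ s in Icc (0:ℝ) H, (A ∩ Icc 0 H).indicator (fun _ => (1:ℝ)) s)
        = (volume (A ∩ Icc 0 H)).toReal := by
      rw [setIntegral_indicator hAmeas, setIntegral_const, smul_eq_mul, mul_one]
      congr 1
      rw [inter_comm, inter_assoc, inter_self]
    have hAidisj : ∀ i j, i < j → j ≤ k → Disjoint (Ai i) (Ai j) := by
      intro i j hij hj
      rw [Set.disjoint_left]
      intro t hti htj
      have h1' : t < τ (i+1) := hti.1.2
      have h2' : τ j ≤ t := htj.1.1
      have h3' : τ (i+1) ≤ τ j := hτle (i+1) j (by omega) (by omega)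
      linarith
    have h3 : volume (A ∩ Icc 0 H) = ∑ i ∈ Finset.range (k+1), volume (Ai i) := by
      rw [hAIcc]
      have hnull : volume (A ∩ {H}) = 0 :=
        measure_mono_null inter_subset_right (measure_singleton H)
      have hU : volume ((⋃ i ∈ Finset.range (k+1), Ai i) ∪ (A ∩ {H}))
          = volume (⋃ i ∈ Finset.range (k+1), Ai i) := by
        refine le_antisymm ?_ (measure_mono subset_union_left)
        calc volume ((⋃ i ∈ Finset.range (k+1), Ai i) ∪ (A ∩ {H}))
            ≤ volume (⋃ i ∈ Finset.range (k+1), Ai i) + volume (A ∩ {H}) :=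
              measure_union_le _ _
        _ = volume (⋃ i ∈ Finset.range (k+1), Ai i) := by rw [hnull, add_zero]
      rw [hU]
      refine measure_biUnion_finset ?_
        (fun i hi => hAim i (by have := Finset.mem_range.1 hi; omega))
      intro i hi j hj hne
      have hi' : i ≤ k := by have := Finset.mem_range.1 (Finset.mem_coe.1 hi); omega
      have hj' : j ≤ k := by have := Finset.mem_range.1 (Finset.mem_coe.1 hj); omega
      rcases lt_or_gt_of_ne hne with h | h
      · exact hAidisj i j h hj'
      · exact (hAidisj j i h hi').symm
    have h4 : ∀ i ≤ k, volume (Ai i) = volume (B i) := by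
      intro i hi
      refine le_antisymm (measure_mono ?_) ?_
      · intro t ht; exact ⟨⟨ht.1.1, ht.1.2.le⟩, ht.2⟩
      · have hsub : B i ⊆ Ai i ∪ {τ (i+1)} := by
          intro t ht
          rcases lt_or_eq_of_le ht.1.2 with h | h
          · exact Or.inl ⟨⟨ht.1.1, h⟩, ht.2⟩
          · exact Or.inr (mem_singleton_iff.2 h)
        calc volume (B i) ≤ volume (Ai i ∪ {τ (i+1)}) := measure_mono hsub
        _ ≤ volume (Ai i) + volume {τ (i+1)} := measure_union_le _ _
        _ = volume (Ai i) := by rw [measure_singleton, add_zero]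
    have hfin' : ∀ i ∈ Finset.range (k+1), volume (Ai i) ≠ ⊤ := by
      intro i hi
      refine ne_top_of_le_ne_top ?_ (measure_mono (fun t ht => ht.1))
      rw [Real.volume_Ico]
      exact ENNReal.ofReal_ne_top
    rw [h1, h2, h3, ENNReal.toReal_sum hfin']
    refine Finset.sum_congr rfl fun i hi => ?_
    rw [h4 i (by have := Finset.mem_range.1 hi; omega)]
  -- conclusion
  refine ⟨hfinite, ∑ i ∈ Finset.range (k+1), ((Z i).ncard : ℝ) / |r x|, ?_, ?_⟩
  · have hfun : ∀ δ : ℝ,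
        (1 / (2 * δ)) * (∫ s in Icc (0:ℝ) H,
            ({u : ℝ | |f u - x| ≤ δ}.indicator (fun _ => (1:ℝ)) s))
          = ∑ i ∈ Finset.range (k+1),
              (volume {s | s ∈ Icc (τ i) (τ (i+1)) ∧ |g i s - x| ≤ δ}).toReal / (2*δ) := by
      intro δ
      rw [hInt δ, Finset.mul_sum]
      exact Finset.sum_congr rfl fun i _ => by ring
    rw [show (fun δ : ℝ => (1 / (2 * δ)) * ∫ s in Icc (0:ℝ) H,
        ({u : ℝ | |f u - x| ≤ δ}.indicator (fun _ => (1:ℝ)) s))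
        = fun δ : ℝ => ∑ i ∈ Finset.range (k+1),
            (volume {s | s ∈ Icc (τ i) (τ (i+1)) ∧ |g i s - x| ≤ δ}).toReal / (2*δ)
      from funext hfun]
    exact tendsto_finset_sum _
      (fun i hi => hZten i (by have := Finset.mem_range.1 hi; omega))
  · rw [hNsum, Finset.mul_sum]
    push_cast
    refine Finset.sum_congr rfl fun i hi => ?_
    rw [mul_comm, div_mul_cancel₀ _ (ne_of_gt hcpos)]
end

section
/- Let (Ω,𝔉,P) be a probability space, H > 0, x ∈ ℝ, and r : ℝ → ℝ continuously differentiable with r(x) ≠ 0. Let X : Ω × [0,H] → ℝ be such that for P-almost every ω, the path t ↦ X(ω,t) is a piecewise C¹ path (with some finite set of jump times depending on ω) which is a piecewise integral curve of r and avoids the level x at endpoints and jumps. Then, almost surely, the local time l_x(H) = lim_{δ→0⁺} (1/(2δ)) ∫₀^H 1_{|X(t)−x|≤δ} dt exists and the number c_x(H) of continuous crossings of the level x by X on [0,H] satisfies c_x(H) = |r(x)| · l_x(H). (Local time–crossing relation, Theorem 2.) -/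
open MeasureTheory Filter Set Topology
open scoped ENNReal

lemma zero_local {a b x c : ℝ} {g : ℝ → ℝ} {z : ℝ}
    (hd : HasDerivWithinAt g c (Icc a b) z) (hz : g z = x) {η : ℝ} (hη : 0 < η) :
    ∃ ε > 0, ∀ s ∈ Icc a b, |s - z| < ε → |g s - x - (s - z) * c| ≤ η * |s - z| := by
  have h := (hasDerivWithinAt_iff_isLittleO.1 hd).bound hη
  rw [eventually_nhdsWithin_iff, Metric.eventually_nhds_iff] at h
  obtain ⟨ε, hε, hb⟩ := h
  refine ⟨ε, hε, fun s hs hsz => ?_⟩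
  have := hb (y := s) (by rwa [Real.dist_eq]) hs
  simpa [hz, Real.norm_eq_abs, smul_eq_mul] using this

lemma piece_finite {a b x c : ℝ} {g : ℝ → ℝ} (hc : c ≠ 0)
    (hgc : ContinuousOn g (Icc a b))
    (hz : ∀ z ∈ Icc a b, g z = x → HasDerivWithinAt g c (Icc a b) z) :
    {s ∈ Icc a b | g s = x}.Finite := by
  set Z := {s ∈ Icc a b | g s = x} with hZ
  have hZeq : Z = Icc a b ∩ g ⁻¹' {x} := by ext s; simp [hZ]
  have hcl : IsClosed Z := by
    rw [hZeq]; exact hgc.preimage_isClosed_of_isClosed isClosed_Icc isClosed_singleton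
  have hcp : IsCompact Z := isCompact_Icc.of_isClosed_subset hcl (fun s hs => hs.1)
  refine hcp.finite (isDiscrete_iff_discreteTopology.mpr (discreteTopology_subtype_iff.2 fun z hzZ => ?_))
  have hcpos : 0 < |c| := abs_pos.2 hc
  obtain ⟨ε, hε, hb⟩ := zero_local (hz z hzZ.1 hzZ.2) hzZ.2 (half_pos hcpos)
  rw [inf_principal_eq_bot]
  rw [Metric.mem_nhdsWithin_iff]
  refine ⟨ε, hε, fun s hs hsZ => ?_⟩
  obtain ⟨hsb, hsne⟩ := hs
  rw [Metric.mem_ball, Real.dist_eq] at hsb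
  have h1 := hb s hsZ.1 hsb
  rw [hsZ.2] at h1
  have h2 : |s - z| ≠ 0 := by
    have : s ≠ z := hsne
    simpa [sub_eq_zero] using this
  have h3 : 0 < |s - z| := lt_of_le_of_ne (abs_nonneg _) (Ne.symm h2)
  have h4 : |(s - z) * c| = |s - z| * |c| := abs_mul _ _
  simp only [sub_self, zero_sub, abs_neg, h4] at h1
  nlinarith

lemma ev_small {M : ℝ} (hM : 0 < M) : ∀ᶠ δ in 𝓝[>] (0:ℝ), δ < M := by
  filter_upwards [Ioo_mem_nhdsGT_of_mem (left_mem_Ico.2 hM)] with δ hδ using hδ.2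

lemma gap_bounds (nn K e : ℝ) (hn0 : 0 ≤ nn) (hK : 0 < K) (he : 0 < e) :
    ∃ η : ℝ, 0 < η ∧ η < K ∧ nn/(K-η) < nn/K + e ∧ nn/K - e < nn/(K+η) := by
  refine ⟨min (K/2) (e * K^2 / (2*(nn+1))), lt_min (by linarith) (by positivity), ?_, ?_, ?_⟩
  all_goals
    set η := min (K/2) (e * K^2 / (2*(nn+1))) with hηdef
    have hηpos : 0 < η := lt_min (by linarith) (by positivity)
    have hηK2 : η ≤ K/2 := min_le_left _ _
    have hηe : η ≤ e * K^2 / (2*(nn+1)) := min_le_right _ _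
    have h2n : (0:ℝ) < 2*(nn+1) := by positivity
    have h' : η * (2*(nn+1)) ≤ e*K^2 := by
      rw [← le_div_iff₀ h2n]; exact hηe
    have hKη : 0 < K - η := by linarith
    have hKη' : 0 < K + η := by linarith
    have hmain : nn*η < e*K*(K-η) := by
      nlinarith [mul_le_mul_of_nonneg_left hηK2 (mul_pos he hK).le]
  · linarith
  · have heq : nn/(K-η) - nn/K = nn*η/((K-η)*K) := by field_simp; ring
    have hlt : nn*η/((K-η)*K) < e := by
      rw [div_lt_iff₀ (by positivity)]; nlinarith [hmain]
    linarith
  · have heq : nn/K - nn/(K+η) = nn*η/((K+η)*K) := by field_simp; ring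
    have hlt : nn*η/((K+η)*K) < e := by
      rw [div_lt_iff₀ (by positivity)]; nlinarith [hmain, mul_pos he hK, hηpos]
    linarith

lemma piece_tendsto {a b x c : ℝ} {g : ℝ → ℝ} (hab : a < b) (hc : c ≠ 0)
    (hgc : ContinuousOn g (Icc a b))
    (hz : ∀ z ∈ Icc a b, g z = x → HasDerivWithinAt g c (Icc a b) z)
    (hga : g a ≠ x) (hgb : g b ≠ x) :
    Tendsto (fun δ : ℝ => (1/(2*δ)) * (volume {s ∈ Icc a b | |g s - x| ≤ δ}).toReal)
      (𝓝[>] (0:ℝ)) (𝓝 (({s ∈ Icc a b | g s = x}.ncard : ℝ) / |c|)) := by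
  set K := |c| with hKdef
  have hK : 0 < K := abs_pos.2 hc
  set Z := {s ∈ Icc a b | g s = x} with hZdef
  have hZfin : Z.Finite := piece_finite hc hgc hz
  set n := Z.ncard with hndef
  set A : ℝ → Set ℝ := fun δ => {s ∈ Icc a b | |g s - x| ≤ δ} with hAdef
  have hAsub : ∀ δ, A δ ⊆ Icc a b := fun δ s hs => hs.1
  have hAne : ∀ δ, volume (A δ) ≠ ⊤ := fun δ =>
    ((measure_mono (hAsub δ)).trans_lt (by simp [Real.volume_Icc])).ne
  have hZsub : Z ⊆ Ioo a b := by
    intro z hzZ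
    rcases eq_or_lt_of_le hzZ.1.1 with h | h
    · exact absurd (h ▸ hzZ.2) hga
    rcases eq_or_lt_of_le hzZ.1.2 with h2 | h2
    · exact absurd (h2 ▸ hzZ.2) hgb
    exact ⟨h, h2⟩
  -- key two-sided bound
  have key : ∀ η : ℝ, 0 < η → η < K → ∀ᶠ δ in 𝓝[>] (0:ℝ), 0 < δ ∧
      (n:ℝ) * (2*δ/(K+η)) ≤ (volume (A δ)).toReal ∧
      (volume (A δ)).toReal ≤ (n:ℝ) * (2*δ/(K-η)) := by
    intro η hη hηK
    have hex : ∀ z : ℝ, ∃ ε : ℝ, 0 < ε ∧ (z ∈ Z →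
        (Icc (z-ε) (z+ε) ⊆ Ioo a b ∧
         ∀ s ∈ Icc a b, |s - z| < ε → |g s - x - (s-z)*c| ≤ η * |s-z|)) := by
      intro z
      by_cases hzZ : z ∈ Z
      · obtain ⟨ε₁, hε₁, h1⟩ := zero_local (hz z hzZ.1 hzZ.2) hzZ.2 hη
        obtain ⟨ε₂, hε₂, h2⟩ := Metric.nhds_basis_closedBall.mem_iff.1
          (isOpen_Ioo.mem_nhds (hZsub hzZ))
        refine ⟨min ε₁ ε₂, lt_min hε₁ hε₂, fun _ =>
          ⟨?_, fun s hs hd => h1 s hs (hd.trans_le (min_le_left _ _))⟩⟩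
        intro s hs
        apply h2
        rw [Real.closedBall_eq_Icc]
        have hle := min_le_right ε₁ ε₂
        exact ⟨by linarith [hs.1], by linarith [hs.2]⟩
      · exact ⟨1, one_pos, fun h => absurd h hzZ⟩
    choose ε hεpos hεZ using hex
    set F := hZfin.toFinset with hFdef
    have hFmem : ∀ z, z ∈ F ↔ z ∈ Z := fun z => hZfin.mem_toFinset
    have hcard : F.card = n := by rw [hndef, ← Set.ncard_coe_finset, hZfin.coe_toFinset]
    set E := insert (1:ℝ) (F.image ε) with hEdef
    have hEne : E.Nonempty := ⟨1, Finset.mem_insert_self _ _⟩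
    set εm := E.min' hEne with hεm
    have hεmpos : 0 < εm := by
      apply (Finset.lt_min'_iff E hEne).2
      intro y hy
      rcases Finset.mem_insert.1 hy with h | h
      · rw [h]; norm_num
      · obtain ⟨z, _, hze⟩ := Finset.mem_image.1 h
        rw [← hze]; exact hεpos z
    have hεmle : ∀ z ∈ F, εm ≤ ε z := fun z hzF =>
      Finset.min'_le _ _ (Finset.mem_insert_of_mem (Finset.mem_image_of_mem ε hzF))
    -- residual compact set
    set R := Icc a b \ ⋃ z ∈ F, Ioo (z - εm) (z + εm) with hRdef
    have hRcomp : IsCompact R := isCompact_Icc.inter_right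
      (isOpen_biUnion fun z _ => isOpen_Ioo).isClosed_compl
    have hRne : ∀ s ∈ R, g s ≠ x := by
      intro s hsR hgs
      have hsZ : s ∈ Z := ⟨hsR.1, hgs⟩
      exact hsR.2 (mem_biUnion ((hFmem s).2 hsZ) (by constructor <;> [linarith; linarith]))
    obtain ⟨η₀, hη₀pos, hη₀⟩ : ∃ η₀ > 0, ∀ s ∈ R, η₀ ≤ |g s - x| := by
      by_cases hR : R.Nonempty
      · obtain ⟨s₀, hs₀, hmin⟩ := hRcomp.exists_isMinOn hR
          ((continuous_abs.comp_continuousOn ((hgc.mono diff_subset).sub continuousOn_const)))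
        refine ⟨|g s₀ - x|, abs_pos.2 (sub_ne_zero.2 (hRne s₀ hs₀)), fun s hs => hmin hs⟩
      · exact ⟨1, one_pos, fun s hs => absurd ⟨s, hs⟩ hR⟩
    -- eventual conditions
    have ev1 : ∀ᶠ δ in 𝓝[>] (0:ℝ), 0 < δ := eventually_mem_nhdsWithin
    have ev2 : ∀ᶠ δ in 𝓝[>] (0:ℝ), δ < η₀ := ev_small hη₀pos
    have ev3 : ∀ᶠ δ in 𝓝[>] (0:ℝ), δ < εm * (K + η) :=
      ev_small (by positivity)
    have ev4 : ∀ᶠ δ in 𝓝[>] (0:ℝ), ∀ z ∈ Z, ∀ z' ∈ Z, z ≠ z' →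
        2 * (δ / (K + η)) < |z - z'| := by
      rw [hZfin.eventually_all]
      intro z hzZ
      rw [hZfin.eventually_all]
      intro z' hz'Z
      by_cases hne : z = z'
      · filter_upwards with δ h; exact absurd hne h
      · have hd : 0 < |z - z'| := abs_pos.2 (sub_ne_zero.2 hne)
        filter_upwards [ev_small (show (0:ℝ) < |z - z'| * (K+η) / 2 by positivity)] with δ h _
        have h2 : 2*δ < |z - z'| * (K+η) := by linarith
        have h3 : (0:ℝ) < K + η := by linarith
        calc 2*(δ/(K+η)) = (2*δ)/(K+η) := (mul_div_assoc _ _ _).symm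
          _ < _ := (div_lt_iff₀ h3).2 h2
    filter_upwards [ev1, ev2, ev3, ev4] with δ hδ hδη₀ hδεm hδsep
    refine ⟨hδ, ?_, ?_⟩
    · -- lower bound
      set w := δ / (K + η) with hwdef
      have hw : 0 < w := by positivity
      have hwεm : w < εm := by rw [hwdef, div_lt_iff₀ (by linarith)]; linarith [hδεm]
      set B : ℝ → Set ℝ := fun z => Icc (z - w) (z + w) with hBdef
      have hBsub : ∀ z ∈ F, B z ⊆ A δ := by
        intro z hzF s hs
        have hzZ : z ∈ Z := (hFmem z).1 hzF
        have habs : |s - z| ≤ w := by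
          rw [abs_le]; constructor <;> [linarith [hs.1]; linarith [hs.2]]
        have hsIcc : s ∈ Icc a b := by
          have hm := hεmle z hzF
          have h1 : s ∈ Icc (z - ε z) (z + ε z) := by
            constructor <;> [linarith [hs.1]; linarith [hs.2]]
          exact Ioo_subset_Icc_self ((hεZ z hzZ).1 h1)
        have h2 := (hεZ z hzZ).2 s hsIcc (lt_of_le_of_lt habs (lt_of_lt_of_le hwεm (hεmle z hzF)))
        have h3 : |(s - z) * c| = |s - z| * K := by rw [abs_mul]
        have h4 : |g s - x| ≤ |g s - x - (s - z)*c| + |(s-z)*c| := by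
          have := abs_add_le (g s - x - (s-z)*c) ((s-z)*c); simpa using this
        refine ⟨hsIcc, ?_⟩
        have h5 : |g s - x| ≤ (K + η) * |s - z| := by nlinarith [abs_nonneg (s-z)]
        have h6 : (K + η) * |s - z| ≤ (K + η) * w := by nlinarith
        have h7 : (K + η) * w = δ := by rw [hwdef]; field_simp
        linarith
      have hBdisj : (↑F : Set ℝ).PairwiseDisjoint B := by
        intro z hzF z' hz'F hne
        rw [Function.onFun, Set.disjoint_left]
        intro s hs hs'
        have h1 : |s - z| ≤ w := by
          rw [abs_le]; constructor <;> [linarith [hs.1]; linarith [hs.2]]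
        have h2 : |s - z'| ≤ w := by
          rw [abs_le]; constructor <;> [linarith [hs'.1]; linarith [hs'.2]]
        have h3 := hδsep z ((hFmem z).1 (by simpa using hzF)) z' ((hFmem z').1 (by simpa using hz'F)) hne
        have h4 : |z - z'| ≤ |s - z| + |s - z'| := by
          have := abs_add_le (z - s) (s - z'); rw [abs_sub_comm z s] at this; simpa using this
        linarith
      have hmeas := measure_biUnion_finset (μ := volume) hBdisj (fun z _ => measurableSet_Icc)
      have hvol : ∀ z ∈ F, volume (B z) = ENNReal.ofReal (2 * w) := by
        intro z _
        rw [hBdef]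
        simp only []
        rw [Real.volume_Icc]
        ring_nf
      have hsum : volume (⋃ z ∈ F, B z) = (n : ℝ≥0∞) * ENNReal.ofReal (2 * w) := by
        rw [hmeas, Finset.sum_congr rfl hvol]
        simp [Finset.sum_const, nsmul_eq_mul, hcard]
      have hle : volume (⋃ z ∈ F, B z) ≤ volume (A δ) :=
        measure_mono (Set.iUnion₂_subset hBsub)
      rw [hsum] at hle
      have hfin : ((n : ℝ≥0∞) * ENNReal.ofReal (2 * w)) ≠ ⊤ := by finiteness
      have h9 := ENNReal.toReal_mono (hAne δ) hle
      rw [ENNReal.toReal_mul, ENNReal.toReal_ofReal (by positivity), ENNReal.toReal_natCast] at h9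
      calc (n:ℝ) * (2 * δ / (K + η)) = (n:ℝ) * (2 * w) := by rw [hwdef]; ring
        _ ≤ _ := h9
    · -- upper bound
      set w := δ / (K - η) with hwdef
      have hKη : 0 < K - η := by linarith
      have hw : 0 < w := by positivity
      have hcover : A δ ⊆ ⋃ z ∈ F, Icc (z - w) (z + w) := by
        intro s hs
        have hsR : s ∉ R := by
          intro hsR
          have := hη₀ s hsR
          have := hs.2
          linarith
        have hsU : s ∈ ⋃ z ∈ F, Ioo (z - εm) (z + εm) := by
          by_contra hsU
          exact hsR ⟨hs.1, hsU⟩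
        obtain ⟨z, hzF, hsz⟩ := mem_iUnion₂.1 hsU
        have hzZ : z ∈ Z := (hFmem z).1 hzF
        have habs : |s - z| < εm := by
          rw [abs_lt]; constructor <;> [linarith [hsz.1]; linarith [hsz.2]]
        have h2 := (hεZ z hzZ).2 s hs.1 (lt_of_lt_of_le habs (hεmle z hzF))
        have h3 : |(s - z) * c| = |s - z| * K := by rw [abs_mul]
        have h4 : |(s-z)*c| - |g s - x| ≤ |g s - x - (s - z)*c| := by
          have h40 := abs_sub_abs_le_abs_sub ((s-z)*c) ((s-z)*c - (g s - x))
          have heq : (s-z)*c - ((s-z)*c - (g s - x)) = g s - x := by ring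
          rw [heq] at h40
          have heq2 : |g s - x - (s-z)*c| = |(s-z)*c - (g s - x)| := abs_sub_comm _ _
          linarith [heq2.le, heq2.ge]
        have h5 : (K - η) * |s - z| ≤ δ := by nlinarith [abs_nonneg (s-z), hs.2]
        have h6 : |s - z| ≤ w := by rw [hwdef, le_div_iff₀ hKη]; linarith
        rw [abs_le] at h6
        exact mem_iUnion₂.2 ⟨z, hzF, by constructor <;> [linarith [h6.1]; linarith [h6.2]]⟩
      have hub : volume (A δ) ≤ (n : ℝ≥0∞) * ENNReal.ofReal (2 * w) := by
        calc volume (A δ) ≤ volume (⋃ z ∈ F, Icc (z - w) (z + w)) := measure_mono hcover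
          _ ≤ ∑ z ∈ F, volume (Icc (z - w) (z + w)) := measure_biUnion_finset_le _ _
          _ = (n : ℝ≥0∞) * ENNReal.ofReal (2 * w) := by
              have hvol : ∀ z ∈ F, volume (Icc (z - w) (z + w)) = ENNReal.ofReal (2 * w) := by
                intro z _; rw [Real.volume_Icc]; ring_nf
              rw [Finset.sum_congr rfl hvol]
              simp [Finset.sum_const, nsmul_eq_mul, hcard]
      have h9 := ENNReal.toReal_mono (by finiteness) hub
      rw [ENNReal.toReal_mul, ENNReal.toReal_ofReal (by positivity), ENNReal.toReal_natCast] at h9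
      calc (volume (A δ)).toReal ≤ (n:ℝ) * (2*w) := h9
        _ = (n:ℝ) * (2*δ/(K-η)) := by rw [hwdef]; ring
  -- conclude
  rw [Metric.tendsto_nhds]
  intro e he
  have hn0 : (0:ℝ) ≤ (n:ℝ) := Nat.cast_nonneg n
  obtain ⟨η, hηpos, hηK, hgap1, hgap2⟩ := gap_bounds (n:ℝ) K e hn0 hK he
  have hKη : 0 < K - η := by linarith
  have hKη' : 0 < K + η := by linarith
  filter_upwards [key η hηpos hηK] with δ hδ3
  obtain ⟨hδ, hlow, hup⟩ := hδ3
  have h2δ : (0:ℝ) < 2*δ := by linarith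
  have hlowV : (n:ℝ)/(K+η) ≤ (1/(2*δ)) * (volume (A δ)).toReal := by
    have h0 := mul_le_mul_of_nonneg_left hlow (le_of_lt (one_div_pos.2 h2δ))
    calc (n:ℝ)/(K+η) = (1/(2*δ)) * ((n:ℝ)*(2*δ/(K+η))) := by field_simp
      _ ≤ _ := h0
  have hupV : (1/(2*δ)) * (volume (A δ)).toReal ≤ (n:ℝ)/(K-η) := by
    have h0 := mul_le_mul_of_nonneg_left hup (le_of_lt (one_div_pos.2 h2δ))
    calc (1/(2*δ)) * (volume (A δ)).toReal ≤ (1/(2*δ)) * ((n:ℝ)*(2*δ/(K-η))) := h0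
      _ = (n:ℝ)/(K-η) := by field_simp
  rw [Real.dist_eq, abs_lt]
  constructor <;> [linarith; linarith]
/-- **Local time–crossing relation (Theorem 2).** If almost every path of `X` is a
piecewise C¹ path which is a piecewise integral curve of `r` avoiding the level `x` at
endpoints and jumps, and `r x ≠ 0`, then almost surely the local time
`l_x(H) = lim_{δ→0⁺} (1/(2δ)) ∫₀^H 1_{|X(t)−x|≤δ} dt` exists and the number of continuous
crossings satisfies `c_x(H) = |r(x)| ⬝ l_x(H)`. -/
theorem local_time_crossing_relation
    {Ω : Type*} [MeasurableSpace Ω] (P : Measure Ω) [IsProbabilityMeasure P]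
    (H x : ℝ) (hH : 0 < H)
    (r : ℝ → ℝ) (hr : ContDiff ℝ 1 r) (hrx : r x ≠ 0)
    (X : Ω → ℝ → ℝ)
    (hpath : ∀ᵐ ω ∂P, ∃ (k : ℕ) (τ : ℕ → ℝ) (g : ℕ → ℝ → ℝ),
      τ 0 = 0 ∧ τ (k+1) = H ∧ (∀ i ≤ k, τ i < τ (i+1)) ∧
      (∀ i ≤ k, ∀ s ∈ Icc (τ i) (τ (i+1)),
        HasDerivWithinAt (g i) (r (g i s)) (Icc (τ i) (τ (i+1))) s) ∧
      (∀ i ≤ k, ∀ s ∈ Ico (τ i) (τ (i+1)), X ω s = g i s) ∧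
      X ω H = g k H ∧
      (∀ i ≤ k, g i (τ i) ≠ x ∧ g i (τ (i+1)) ≠ x)) :
    ∀ᵐ ω ∂P, ∃ l : ℝ,
      Tendsto
        (fun δ : ℝ => (1 / (2 * δ)) *
          ∫ s in Icc (0:ℝ) H, ({u : ℝ | |X ω u - x| ≤ δ}.indicator (fun _ => (1:ℝ)) s))
        (𝓝[>] (0:ℝ)) (𝓝 l) ∧
      ((crossSet H x (X ω)).ncard : ℝ) = |r x| * l := by
  classical
  filter_upwards [hpath] with ω hω
  obtain ⟨k, τ, g, hτ0, hτk, hlt, hderiv, hagree, hgH, havoid⟩ := hω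
  set f := X ω with hf
  set K := |r x| with hKdef
  have hK : 0 < K := abs_pos.2 hrx
  -- monotonicity of τ
  have hmono : ∀ i j, i < j → j ≤ k+1 → τ i < τ j := by
    intro i j hij hjk
    induction j with
    | zero => omega
    | succ m ih =>
      rcases Nat.lt_succ_iff_lt_or_eq.1 hij with h | h
      · exact lt_trans (ih h (by omega)) (hlt m (by omega))
      · subst h; exact hlt i (by omega)
  have hmono' : ∀ i j, i ≤ j → j ≤ k+1 → τ i ≤ τ j := by
    intro i j hij hjk
    rcases Nat.lt_or_ge i j with h | h
    · exact (hmono i j h hjk).le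
    · have : i = j := le_antisymm (by omega) h
      rw [this]
  have hτnn : ∀ i, i ≤ k+1 → 0 ≤ τ i := fun i hi => hτ0 ▸ hmono' 0 i (Nat.zero_le _) hi
  have hτH : ∀ i, i ≤ k+1 → τ i ≤ H := fun i hi => hτk ▸ hmono' i (k+1) hi le_rfl
  -- covering
  have hcover : ∀ t ∈ Ico (0:ℝ) H, ∃ i ≤ k, t ∈ Ico (τ i) (τ (i+1)) := by
    intro t ht
    set i := Nat.findGreatest (fun j => τ j ≤ t) (k+1) with hidef
    have hi1 : τ i ≤ t := by
      have h := Nat.findGreatest_spec (P := fun j => τ j ≤ t) (m := 0) (n := k+1)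
        (Nat.zero_le _) (by simpa [hτ0] using ht.1)
      exact h
    have hile : i ≤ k + 1 := Nat.findGreatest_le _
    have hik : i ≤ k := by
      rcases Nat.lt_or_ge i (k+1) with h | h
      · omega
      · exfalso
        have : i = k+1 := by omega
        rw [this, hτk] at hi1
        exact absurd ht.2 (not_lt.2 hi1)
    refine ⟨i, hik, hi1, ?_⟩
    by_contra hcon
    push_neg at hcon
    exact Nat.findGreatest_is_greatest (by omega : Nat.findGreatest (fun j => τ j ≤ t) (k+1) < i+1)
      (by omega) hcon
  -- disjointness of the Ico pieces
  have hdisj : ∀ i ≤ k, ∀ j ≤ k, i ≠ j →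
      Disjoint (Ico (τ i) (τ (i+1))) (Ico (τ j) (τ (j+1))) := by
    have haux : ∀ i j, i < j → j ≤ k → Disjoint (Ico (τ i) (τ (i+1))) (Ico (τ j) (τ (j+1))) := by
      intro i j hij hjk
      rw [Set.disjoint_left]
      intro s hsi hsj
      have h1 : τ (i+1) ≤ τ j := hmono' (i+1) j (by omega) (by omega)
      linarith [hsi.2, hsj.1]
    intro i hi j hj hij
    rcases Nat.lt_or_ge i j with h | h
    · exact haux i j h hj
    · exact (haux j i (by omega) hi).symm
  -- continuity of the pieces
  have hcont : ∀ i ≤ k, ContinuousOn (g i) (Icc (τ i) (τ (i+1))) :=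
    fun i hi s hs => (hderiv i hi s hs).continuousWithinAt
  have hderx : ∀ i ≤ k, ∀ z ∈ Icc (τ i) (τ (i+1)), g i z = x →
      HasDerivWithinAt (g i) (r x) (Icc (τ i) (τ (i+1))) z := by
    intro i hi z hz hgz
    have h := hderiv i hi z hz
    rwa [hgz] at h
  -- zero sets
  set Zs : ℕ → Set ℝ := fun i => {s ∈ Icc (τ i) (τ (i+1)) | g i s = x} with hZs
  have hZfin : ∀ i ≤ k, (Zs i).Finite := fun i hi =>
    piece_finite hrx (hcont i hi) (hderx i hi)
  have hZsub : ∀ i ≤ k, Zs i ⊆ Ioo (τ i) (τ (i+1))  := by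
    intro i hi z hz
    rcases eq_or_lt_of_le hz.1.1 with h | h
    · exact absurd (h ▸ hz.2) (havoid i hi).1
    rcases eq_or_lt_of_le hz.1.2 with h2 | h2
    · exact absurd (h2 ▸ hz.2) (havoid i hi).2
    exact ⟨h, h2⟩
  -- crossing set identification
  have hcrosseq : crossSet H x f = ⋃ i ∈ Finset.range (k+1), Zs i := by
    apply Set.Subset.antisymm
    · rintro s ⟨hs01, _, hsx⟩
      obtain ⟨i, hik, hsi⟩ := hcover s ⟨hs01.1.le, hs01.2⟩
      refine Set.mem_iUnion₂.2 ⟨i, Finset.mem_range.2 (by omega), ?_⟩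
      exact ⟨Ico_subset_Icc_self hsi, by rw [← hagree i hik s hsi]; exact hsx⟩
    · intro s hsU
      obtain ⟨i, him, hsZ⟩ := Set.mem_iUnion₂.1 hsU
      have hik' : i ≤ k := Nat.lt_succ_iff.1 (Finset.mem_range.1 him)
      have hzIoo : s ∈ Ioo (τ i) (τ (i+1)) := hZsub i hik' hsZ
      have hs01 : s ∈ Ioo (0:ℝ) H :=
        ⟨lt_of_le_of_lt (hτnn i (by omega)) hzIoo.1, lt_of_lt_of_le hzIoo.2 (hτH (i+1) (by omega))⟩
      have hcg : ContinuousAt (g i) s :=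
        ((hderiv i hik' s (Ioo_subset_Icc_self hzIoo)).continuousWithinAt).continuousAt
          (Icc_mem_nhds hzIoo.1 hzIoo.2)
      have heq : g i =ᶠ[𝓝 s] f := by
        apply eventuallyEq_of_mem (isOpen_Ioo.mem_nhds hzIoo)
        intro u hu
        exact (hagree i hik' u (Ioo_subset_Ico_self hu)).symm
      exact ⟨hs01, hcg.congr heq,
        by rw [hagree i hik' s (Ioo_subset_Ico_self hzIoo)]; exact hsZ.2⟩
  -- crossing count
  set Fi : ℕ → Finset ℝ := fun i => if hi : i ≤ k then (hZfin i hi).toFinset else ∅ with hFi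
  have hFicoe : ∀ i ≤ k, (Fi i : Set ℝ) = Zs i := by
    intro i hi
    simp only [hFi, dif_pos hi, Set.Finite.coe_toFinset]
  have hcount : (crossSet H x f).ncard = ∑ i ∈ Finset.range (k+1), (Zs i).ncard := by
    have h1 : crossSet H x f = ↑((Finset.range (k+1)).biUnion Fi) := by
      rw [hcrosseq, Finset.coe_biUnion]
      apply Set.iUnion₂_congr
      intro i hi
      rw [hFicoe i (Nat.lt_succ_iff.1 (Finset.mem_range.1 (Finset.mem_coe.1 hi)))]
    rw [h1, Set.ncard_coe_finset]
    rw [Finset.card_biUnion]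
    · apply Finset.sum_congr rfl
      intro i hi
      have hik : i ≤ k := Nat.lt_succ_iff.1 (Finset.mem_range.1 hi)
      rw [← Set.ncard_coe_finset, hFicoe i hik]
    · intro i hi j hj hij
      have hik : i ≤ k := Nat.lt_succ_iff.1 (Finset.mem_range.1 hi)
      have hjk : j ≤ k := Nat.lt_succ_iff.1 (Finset.mem_range.1 hj)
      rw [Function.onFun, Finset.disjoint_left]
      intro s hsi hsj
      have h1 : s ∈ Zs i := by rw [← hFicoe i hik]; exact hsi
      have h2 : s ∈ Zs j := by rw [← hFicoe j hjk]; exact hsj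
      exact (Set.disjoint_left.1 (hdisj i hik j hjk hij))
        (Ioo_subset_Ico_self (hZsub i hik h1)) (Ioo_subset_Ico_self (hZsub j hjk h2))
  -- integral identity
  have hint : ∀ δ : ℝ,
      (∫ s in Icc (0:ℝ) H, ({u : ℝ | |f u - x| ≤ δ}.indicator (fun _ => (1:ℝ)) s)) =
      ∑ i ∈ Finset.range (k+1),
        (volume {s ∈ Icc (τ i) (τ (i+1)) | |g i s - x| ≤ δ}).toReal := by
    intro δ
    set A' := {u : ℝ | |f u - x| ≤ δ} with hA'
    set S : ℕ → Set ℝ := fun i =>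
      (Icc (τ i) (τ (i+1)) ∩ (g i) ⁻¹' (Icc (x-δ) (x+δ))) ∩ Ico (τ i) (τ (i+1)) with hS
    have hSmeas : ∀ i ≤ k, MeasurableSet (S i) := by
      intro i hi
      exact (((hcont i hi).preimage_isClosed_of_isClosed isClosed_Icc
        isClosed_Icc).measurableSet).inter measurableSet_Ico
    set B := ⋃ i ∈ Finset.range (k+1), S i with hB
    have hBmeas : MeasurableSet B :=
      MeasurableSet.biUnion (Finset.range (k+1)).countable_toSet
        (fun i hi => hSmeas i (Nat.lt_succ_iff.1 (Finset.mem_range.1 (Finset.mem_coe.1 hi))))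
    have hiff : ∀ s ∈ Ico (0:ℝ) H, (s ∈ A' ↔ s ∈ B) := by
      intro s hs
      obtain ⟨i, hik, hsi⟩ := hcover s hs
      have hfs : f s = g i s := hagree i hik s hsi
      constructor
      · intro hsA
        have h1 : |g i s - x| ≤ δ := by rw [← hfs]; exact hsA
        refine Set.mem_iUnion₂.2 ⟨i, Finset.mem_range.2 (by omega), ⟨Ico_subset_Icc_self hsi, ?_⟩, hsi⟩
        rw [Set.mem_preimage, Set.mem_Icc]
        rw [abs_le] at h1
        constructor <;> linarith [h1.1, h1.2]
      · intro hsB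
        obtain ⟨j, hjm, hsj⟩ := Set.mem_iUnion₂.1 hsB
        have hjk : j ≤ k := Nat.lt_succ_iff.1 (Finset.mem_range.1 hjm)
        have hij : i = j := by
          by_contra hne
          exact (Set.disjoint_left.1 (hdisj i hik j hjk hne)) hsi hsj.2
        subst hij
        have h1 : g i s ∈ Icc (x-δ) (x+δ) := hsj.1.2
        rw [Set.mem_Icc] at h1
        show |f s - x| ≤ δ
        rw [hfs, abs_le]
        constructor <;> linarith [h1.1, h1.2]
    have step1 : (∫ s in Icc (0:ℝ) H, (A'.indicator (fun _ => (1:ℝ)) s)) =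
        ∫ s in Ico (0:ℝ) H, (A'.indicator (fun _ => (1:ℝ)) s) :=
      (setIntegral_congr_set Ico_ae_eq_Icc).symm
    have step2 : (∫ s in Ico (0:ℝ) H, (A'.indicator (fun _ => (1:ℝ)) s)) =
        ∫ s in Ico (0:ℝ) H, (B.indicator (fun _ => (1:ℝ)) s) := by
      apply setIntegral_congr_fun measurableSet_Ico
      intro s hs
      by_cases hsA : s ∈ A'
      · rw [Set.indicator_of_mem hsA, Set.indicator_of_mem ((hiff s hs).1 hsA)]
      · rw [Set.indicator_of_notMem hsA,
          Set.indicator_of_notMem (fun hsB => hsA ((hiff s hs).2 hsB))]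
    have hBsub : B ⊆ Ico (0:ℝ) H := by
      intro s hsB
      obtain ⟨j, hjm, hsj⟩ := Set.mem_iUnion₂.1 hsB
      have hjk : j ≤ k := Nat.lt_succ_iff.1 (Finset.mem_range.1 hjm)
      exact ⟨le_trans (hτnn j (by omega)) hsj.2.1,
        lt_of_lt_of_le hsj.2.2 (hτH (j+1) (by omega))⟩
    have step3 : (∫ s in Ico (0:ℝ) H, (B.indicator (fun _ => (1:ℝ)) s)) =
        (volume B).toReal := by
      rw [setIntegral_indicator hBmeas]
      rw [Set.inter_eq_self_of_subset_right hBsub]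
      rw [setIntegral_const]
      rw [smul_eq_mul, mul_one]
      rfl
    have step4 : volume B = ∑ i ∈ Finset.range (k+1), volume (S i) := by
      apply measure_biUnion_finset
      · intro i hi j hj hij
        have hik : i ≤ k := Nat.lt_succ_iff.1 (Finset.mem_range.1 (Finset.mem_coe.1 hi))
        have hjk : j ≤ k := Nat.lt_succ_iff.1 (Finset.mem_range.1 (Finset.mem_coe.1 hj))
        exact Set.disjoint_of_subset (fun s hs => hs.2) (fun s hs => hs.2)
          (hdisj i hik j hjk hij)
      · intro i hi
        exact hSmeas i (Nat.lt_succ_iff.1 (Finset.mem_range.1 hi))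
    have step5 : ∀ i ≤ k, volume (S i) =
        volume {s ∈ Icc (τ i) (τ (i+1)) | |g i s - x| ≤ δ} := by
      intro i hi
      set C := {s ∈ Icc (τ i) (τ (i+1)) | |g i s - x| ≤ δ} with hC
      have hSC : S i ⊆ C := by
        rintro s ⟨⟨hs1, hs2⟩, _⟩
        rw [Set.mem_preimage, Set.mem_Icc] at hs2
        exact ⟨hs1, by rw [abs_le]; constructor <;> linarith [hs2.1, hs2.2]⟩
      have hCS : C ⊆ S i ∪ {τ (i+1)} := by
        rintro s ⟨hs1, hs2⟩
        rcases eq_or_lt_of_le hs1.2 with h | h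
        · exact Or.inr (by simp [h])
        · refine Or.inl ⟨⟨hs1, ?_⟩, hs1.1, h⟩
          rw [Set.mem_preimage, Set.mem_Icc]
          rw [abs_le] at hs2
          constructor <;> linarith [hs2.1, hs2.2]
      apply le_antisymm (measure_mono hSC)
      calc volume C ≤ volume (S i ∪ {τ (i+1)}) := measure_mono hCS
        _ ≤ volume (S i) + volume ({τ (i+1)} : Set ℝ) := measure_union_le _ _
        _ = volume (S i) := by simp
    rw [step1, step2, step3, step4]
    rw [ENNReal.toReal_sum (fun i hi => ((measure_mono (fun s (hs : s ∈ S i) => hs.2)).trans_lt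
      (by simp [Real.volume_Ico])).ne)]
    apply Finset.sum_congr rfl
    intro i hi
    rw [step5 i (Nat.lt_succ_iff.1 (Finset.mem_range.1 hi))]
  -- assemble
  refine ⟨(∑ i ∈ Finset.range (k+1), ((Zs i).ncard : ℝ)) / K, ?_, ?_⟩
  · have htend : Tendsto (fun δ : ℝ => ∑ i ∈ Finset.range (k+1),
        (1/(2*δ)) * (volume {s ∈ Icc (τ i) (τ (i+1)) | |g i s - x| ≤ δ}).toReal)
        (𝓝[>] (0:ℝ)) (𝓝 (∑ i ∈ Finset.range (k+1), ((Zs i).ncard : ℝ) / K)) := by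
      apply tendsto_finset_sum
      intro i hi
      have hik : i ≤ k := Nat.lt_succ_iff.1 (Finset.mem_range.1 hi)
      exact piece_tendsto (hlt i hik) hrx (hcont i hik) (hderx i hik)
        (havoid i hik).1 (havoid i hik).2
    have hfeq : (fun δ : ℝ => (1 / (2 * δ)) *
          ∫ s in Icc (0:ℝ) H, ({u : ℝ | |f u - x| ≤ δ}.indicator (fun _ => (1:ℝ)) s)) =
        (fun δ : ℝ => ∑ i ∈ Finset.range (k+1),
          (1/(2*δ)) * (volume {s ∈ Icc (τ i) (τ (i+1)) | |g i s - x| ≤ δ}).toReal) := by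
      funext δ
      rw [hint δ, Finset.mul_sum]
    rw [hfeq]
    convert htend using 2
    rw [← Finset.sum_div]
  · rw [hcount]
    push_cast
    rw [mul_div_cancel₀]
    exact ne_of_gt hK
end
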